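/- arXiv:1407.0341 — 14 statements merged into one kernel-verified Lean document; each statement's English description precedes it below -/
import Mathlib

section
/- Let K be a field of characteristic zero, L a Lie algebra over K, and x : ℕ → L a family of elements satisfying ⁅x(r+1), x(s)⁆ + ⁅x(s+1), x(r)⁆ = 0 for all r, s ∈ ℕ. Then ⁅x(r), x(s)⁆ = 0 for all r, s ∈ ℕ. -/
/-- Lemma 7.10, case `(X, d_i) ≠ (A_{2n}^{(2)}, 1)` (rescaled): the specialization at `q = 1`
of the Drinfeld relation (X1) implies that all brackets `⁅x r, x s⁆` vanish. -/
theorem stmt_1 (K : Type*) [Field K] [CharZero K]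
    (L : Type*) [LieRing L] [LieAlgebra K L]
    (x : ℕ → L)
    (hx : ∀ r s : ℕ, ⁅x (r + 1), x s⁆ + ⁅x (s + 1), x r⁆ = 0) :
    ∀ r s : ℕ, ⁅x r, x s⁆ = 0 := by
  have shift : ∀ k r s : ℕ, ⁅x (r + k), x s⁆ = ⁅x r, x (s + k)⁆ := by
    intro k
    induction k with
    | zero => simp
    | succ n ih =>
      intro r s
      have h1 := hx (r + n) s
      have h2 : ⁅x (r + n + 1), x s⁆ = -⁅x (s + 1), x (r + n)⁆ :=
        eq_neg_of_add_eq_zero_left h1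
      calc ⁅x (r + (n + 1)), x s⁆ = -⁅x (s + 1), x (r + n)⁆ := by
              rw [show r + (n + 1) = r + n + 1 by ring, h2]
        _ = ⁅x (r + n), x (s + 1)⁆ := by rw [← lie_skew, neg_neg]
        _ = ⁅x r, x (s + 1 + n)⁆ := ih r (s + 1)
        _ = ⁅x r, x (s + (n + 1))⁆ := by ring_nf
  intro r s
  have h1 : ⁅x r, x s⁆ = ⁅x 0, x (s + r)⁆ := by
    have := shift r 0 s; simpa [Nat.zero_add] using this
  have h2 : ⁅x s, x r⁆ = ⁅x 0, x (r + s)⁆ := by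
    have := shift s 0 r; simpa [Nat.zero_add] using this
  have heq : ⁅x r, x s⁆ = ⁅x s, x r⁆ := by rw [h1, h2, Nat.add_comm]
  have hneg : ⁅x r, x s⁆ = -⁅x r, x s⁆ := by
    nth_rewrite 1 [heq]; rw [← lie_skew]
  have h2v : (2 : K) • ⁅x r, x s⁆ = 0 := by
    rw [two_smul]; nth_rewrite 2 [hneg]; abel
  have := smul_eq_zero.mp h2v
  rcases this with h | h
  · exact absurd h two_ne_zero
  · exact h
end

section
/- Let K be a field of characteristic zero, L a Lie algebra over K, and x : ℕ → L a family satisfying ⁅x(r+2), x(s)⁆ + ⁅x(s+2), x(r)⁆ = 0 for all r, s ∈ ℕ. Then: (1) ⁅x(r), x(s)⁆ = 0 whenever r + s is even; and (2) ⁅x(s+2h+1), x(s)⁆ = (−1)^h ⁅x(s+h+1), x(s+h)⁆ for all s, h ∈ ℕ. In particular (−1)^s ⁅x(r), x(s)⁆ depends only on r + s. -/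
/-- Lemma 7.10, case `(X_{ñ}^{(k)}, d_i) = (A_{2n}^{(2)}, 1)`: the specialization at `q = 1`
of the Drinfeld relation (X2) implies that `⁅x r, x s⁆ = 0` for `r + s` even, that
`⁅x (s+2h+1), x s⁆ = (−1)^h • ⁅x (s+h+1), x (s+h)⁆`, and in particular that
`(−1)^s • ⁅x r, x s⁆` depends only on `r + s`. -/
theorem stmt_2 (K : Type*) [Field K] [CharZero K]
    (L : Type*) [LieRing L] [LieAlgebra K L]
    (x : ℕ → L)
    (hx : ∀ r s : ℕ, ⁅x (r + 2), x s⁆ + ⁅x (s + 2), x r⁆ = 0) :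
    (∀ r s : ℕ, Even (r + s) → ⁅x r, x s⁆ = 0) ∧
    (∀ s h : ℕ, ⁅x (s + 2 * h + 1), x s⁆ = ((-1 : ℤ) ^ h) • ⁅x (s + h + 1), x (s + h)⁆) ∧
    (∀ r s r' s' : ℕ, r + s = r' + s' →
      ((-1 : ℤ) ^ s) • ⁅x r, x s⁆ = ((-1 : ℤ) ^ s') • ⁅x r', x s'⁆) := by
  -- one-step shift
  have key : ∀ r s : ℕ, ⁅x (r + 2), x s⁆ = ⁅x r, x (s + 2)⁆ := by
    intro r s
    have h := hx r s
    have h2 : ⁅x (r + 2), x s⁆ = -⁅x (s + 2), x r⁆ := by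
      rw [eq_neg_iff_add_eq_zero]; exact h
    rw [h2, ← lie_skew, neg_neg]
  -- k-step shift
  have shift : ∀ k r s : ℕ, ⁅x (r + 2 * k), x s⁆ = ⁅x r, x (s + 2 * k)⁆ := by
    intro k
    induction k with
    | zero => simp
    | succ k ih =>
      intro r s
      have e1 : r + 2 * (k + 1) = (r + 2) + 2 * k := by ring
      have e2 : s + 2 * (k + 1) = (s + 2 * k) + 2 := by ring
      rw [e1, ih (r + 2) s, key, e2]
  -- vanishing on even sums
  have part1 : ∀ r s : ℕ, Even (r + s) → ⁅x r, x s⁆ = 0 := by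
    have z : ∀ s k : ℕ, ⁅x (s + 2 * k), x s⁆ = 0 := by
      intro s k
      have h := shift k s s
      have hneg : ⁅x (s + 2 * k), x s⁆ = -⁅x (s + 2 * k), x s⁆ :=
        h.trans (lie_skew (x s) (x (s + 2 * k))).symm
      have h2 : (2 : K) • ⁅x (s + 2 * k), x s⁆ = 0 := by
        rw [two_smul]
        nth_rewrite 1 [hneg]
        exact neg_add_cancel _
      rcases smul_eq_zero.mp h2 with h' | h'
      · exact absurd h' two_ne_zero
      · exact h'
    intro r s hrs
    rcases le_total s r with h | h
    · obtain ⟨k, hk⟩ : ∃ k, r = s + 2 * k := by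
        obtain ⟨m, hm⟩ := hrs; exact ⟨m - s, by omega⟩
      rw [hk]; exact z s k
    · obtain ⟨k, hk⟩ : ∃ k, s = r + 2 * k := by
        obtain ⟨m, hm⟩ := hrs; exact ⟨m - r, by omega⟩
      rw [← lie_skew, hk, z r k, neg_zero]
  -- swap lemma
  have lemB : ∀ r s : ℕ, ⁅x (r + 1), x s⁆ = ⁅x (s + 1), x r⁆ := by
    intro r s
    rcases Nat.even_or_odd (r + s) with hev | hod
    · rcases le_total s r with h | h
      · obtain ⟨k, hk⟩ : ∃ k, r = s + 2 * k := by
          obtain ⟨m, hm⟩ := hev; exact ⟨m - s, by omega⟩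
        have e : r + 1 = (s + 1) + 2 * k := by omega
        rw [e, shift k (s + 1) s, hk]
      · obtain ⟨k, hk⟩ : ∃ k, s = r + 2 * k := by
          obtain ⟨m, hm⟩ := hev; exact ⟨m - r, by omega⟩
        have e : s + 1 = (r + 1) + 2 * k := by omega
        rw [e, shift k (r + 1) r, hk]
    · have h1 : ⁅x (r + 1), x s⁆ = 0 := part1 _ _ (by
        obtain ⟨m, hm⟩ := hod; exact ⟨m + 1, by omega⟩)
      have h2 : ⁅x (s + 1), x r⁆ = 0 := part1 _ _ (by
        obtain ⟨m, hm⟩ := hod; exact ⟨m + 1, by omega⟩)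
      rw [h1, h2]
  -- invariant step
  have Fstep : ∀ r s : ℕ,
      ((-1 : ℤ) ^ s) • ⁅x (r + 1), x s⁆ = ((-1 : ℤ) ^ (s + 1)) • ⁅x r, x (s + 1)⁆ := by
    intro r s
    rw [lemB r s, pow_succ, mul_comm, mul_smul, neg_one_smul, ← smul_neg, lie_skew]
  -- the invariant equals its value at (r+s, 0)
  have G : ∀ s r : ℕ, ((-1 : ℤ) ^ s) • ⁅x r, x s⁆ = ⁅x (r + s), x 0⁆ := by
    intro s
    induction s with
    | zero => intro r; simp
    | succ s ih =>
      intro r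
      have e : r + 1 + s = r + (s + 1) := by ring
      rw [← Fstep r s, ih (r + 1), e]
  refine ⟨part1, ?_, ?_⟩
  · intro s h
    have h1 := G s (s + 2 * h + 1)
    have h2 := G (s + h) (s + h + 1)
    have e : s + h + 1 + (s + h) = s + 2 * h + 1 + s := by ring
    rw [e] at h2
    have h3 : ((-1 : ℤ) ^ s) • ⁅x (s + 2 * h + 1), x s⁆
        = ((-1 : ℤ) ^ (s + h)) • ⁅x (s + h + 1), x (s + h)⁆ := by rw [h1, h2]
    have h4 := congrArg (fun v => ((-1 : ℤ) ^ s) • v) h3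
    simp only [smul_smul, ← pow_add] at h4
    have e1 : ((-1 : ℤ)) ^ (s + s) = 1 := Even.neg_one_pow ⟨s, rfl⟩
    have e2 : ((-1 : ℤ)) ^ (s + (s + h)) = (-1 : ℤ) ^ h := by
      rw [show s + (s + h) = (s + s) + h by ring, pow_add, e1, one_mul]
    rwa [e1, one_smul, e2] at h4
  · intro r s r' s' hsum
    rw [G s r, G s' r', hsum]
end

section
/- Let K be a field of characteristic zero, L a Lie algebra over K, and x : ℕ → L a family satisfying: (a) ⁅x(r+2), x(s)⁆ + ⁅x(s+2), x(r)⁆ = 0 for all r, s ∈ ℕ; and (b) for all r₁, r₂, r₃ ∈ ℕ, the sum over all six permutations σ of {1,2,3} of ⁅⁅x(r_{σ(1)}+1), x(r_{σ(2)})⁆, x(r_{σ(3)})⁆ equals 0. Then ⁅⁅x(a), x(b)⁆, x(c)⁆ = 0 for all a, b, c ∈ ℕ. -/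
private lemma aux_perm3_sum {M : Type*} [AddCommMonoid M] (f : Equiv.Perm (Fin 3) → M) :
    ∑ σ, f σ = f 1 + f (Equiv.swap 0 1) + f (Equiv.swap 0 2) + f (Equiv.swap 1 2)
      + f (finRotate 3) + f (finRotate 3)⁻¹ := by
  rw [show (Finset.univ : Finset (Equiv.Perm (Fin 3))) =
    {1, Equiv.swap 0 1, Equiv.swap 0 2, Equiv.swap 1 2, finRotate 3, (finRotate 3)⁻¹} from by decide]
  rw [Finset.sum_insert (by decide), Finset.sum_insert (by decide), Finset.sum_insert (by decide),
    Finset.sum_insert (by decide), Finset.sum_insert (by decide), Finset.sum_singleton]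
  abel

private lemma aux_tf (K : Type*) [Field K] [CharZero K]
    {L : Type*} [LieRing L] [LieAlgebra K L] (n : K) (hn : n ≠ 0) (z : L)
    (h : n • z = 0) : z = 0 := by
  rcases smul_eq_zero.mp h with h' | h'
  · exact absurd h' hn
  · exact h'

/-- Lemma 7.12: in the case `(X_{ñ}^{(k)}, d_i) = (A_{2n}^{(2)}, 1)`, relations
(x_{1,2}) (here in their equivalent form (x2)) and (x3) imply relation (x_3):
all double brackets `⁅⁅x a, x b⁆, x c⁆` vanish. -/
theorem stmt_3 (K : Type*) [Field K] [CharZero K]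
    (L : Type*) [LieRing L] [LieAlgebra K L]
    (x : ℕ → L)
    (hx2 : ∀ r s : ℕ, ⁅x (r + 2), x s⁆ + ⁅x (s + 2), x r⁆ = 0)
    (hx3 : ∀ r : Fin 3 → ℕ,
      ∑ σ : Equiv.Perm (Fin 3), ⁅⁅x (r (σ 0) + 1), x (r (σ 1))⁆, x (r (σ 2))⁆ = 0) :
    ∀ a b c : ℕ, ⁅⁅x a, x b⁆, x c⁆ = 0 := by
  -- 2-torsion-freeness
  have tf2 : ∀ z : L, z + z = 0 → z = 0 := by
    intro z h
    exact aux_tf K (2 : K) (by norm_num) z (by rw [two_smul]; exact h)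
  have tf6 : ∀ z : L, z + z + z + z + z + z = 0 → z = 0 := by
    intro z h
    refine aux_tf K (6 : K) (by norm_num) z ?_
    rw [show (6 : K) = 1 + 1 + 1 + 1 + 1 + 1 by norm_num]
    simp only [add_smul, one_smul]
    exact h
  -- expanded form of hx3
  have hx3' : ∀ u v w : ℕ,
      ⁅⁅x (u+1), x v⁆, x w⁆ + ⁅⁅x (v+1), x u⁆, x w⁆ + ⁅⁅x (w+1), x v⁆, x u⁆ +
      ⁅⁅x (u+1), x w⁆, x v⁆ + ⁅⁅x (v+1), x w⁆, x u⁆ + ⁅⁅x (w+1), x u⁆, x v⁆ = 0 := by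
    intro u v w
    have h := hx3 ![u, v, w]
    rw [aux_perm3_sum] at h
    have e1 : (Equiv.swap (0 : Fin 3) 1) 2 = 2 := by decide
    have e2 : (Equiv.swap (0 : Fin 3) 2) 1 = 1 := by decide
    have e3 : (Equiv.swap (1 : Fin 3) 2) 0 = 0 := by decide
    simpa [e1, e2, e3] using h
  -- the shift relation
  have shift : ∀ a b : ℕ, ⁅x (a + 2), x b⁆ = ⁅x a, x (b + 2)⁆ := by
    intro a b
    have h : ⁅x (a + 2), x b⁆ = -⁅x (b + 2), x a⁆ := eq_neg_of_add_eq_zero_left (hx2 a b)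
    rw [h, lie_skew]
  have shiftk : ∀ k a b : ℕ, ⁅x (a + 2*k), x b⁆ = ⁅x a, x (b + 2*k)⁆ := by
    intro k
    induction k with
    | zero => simp
    | succ n ih =>
      intro a b
      rw [show a + 2*(n+1) = (a+2) + 2*n from by ring, ih (a+2) b, shift a (b + 2*n),
        show b + 2*n + 2 = b + 2*(n+1) from by ring]
  -- brackets of pairs with even sum vanish
  have pair_even : ∀ a b : ℕ, Even (a + b) → ⁅x a, x b⁆ = 0 := by
    have pair_same : ∀ a k : ℕ, ⁅x a, x (a + 2*k)⁆ = 0 := by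
      intro a k
      have h1 : ⁅x (a + 2*k), x a⁆ = ⁅x a, x (a + 2*k)⁆ := shiftk k a a
      apply tf2
      calc ⁅x a, x (a + 2*k)⁆ + ⁅x a, x (a + 2*k)⁆
          = ⁅x a, x (a + 2*k)⁆ + ⁅x (a + 2*k), x a⁆ := by rw [h1]
        _ = 0 := by rw [← lie_skew (x a) (x (a + 2*k))]; abel
    intro a b hab
    obtain ⟨t, ht⟩ := hab
    rcases le_total a b with h | h
    · obtain ⟨k, rfl⟩ : ∃ k, b = a + 2*k := ⟨(b - a)/2, by omega⟩
      exact pair_same a k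
    · obtain ⟨k, rfl⟩ : ∃ k, a = b + 2*k := ⟨(a - b)/2, by omega⟩
      rw [← lie_skew, pair_same b k, neg_zero]
  -- normalization lemmas
  have key2 : ∀ m b c : ℕ, ⁅⁅x (2*m), x b⁆, x c⁆ = ⁅⁅x 0, x (b + 2*m)⁆, x c⁆ := by
    intro m b c
    rw [show 2*m = 0 + 2*m from by ring, shiftk m 0 b]
    norm_num
  have key3 : ∀ m b c : ℕ, ⁅⁅x (2*m+1), x b⁆, x c⁆ = ⁅⁅x 1, x (b + 2*m)⁆, x c⁆ := by
    intro m b c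
    rw [show 2*m+1 = 1 + 2*m from by ring, shiftk m 1 b]
  have key1 : ∀ m c : ℕ, ⁅⁅x 1, x (2*m)⁆, x c⁆ = -⁅⁅x 0, x (2*m+1)⁆, x c⁆ := by
    intro m c
    have h1 : ⁅x 1, x (2*m)⁆ = -⁅x (2*m), x 1⁆ := (lie_skew _ _).symm
    have h2 : ⁅x (2*m), x 1⁆ = ⁅x 0, x (2*m+1)⁆ := by
      have h3 := shiftk m 0 1
      rw [show 0 + 2*m = 2*m from by ring, show 1 + 2*m = 2*m+1 from by ring] at h3
      exact h3
    rw [h1, h2, neg_lie]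
  -- W m c := ⁅⁅x 0, x m⁆, x c⁆
  -- Fact (ii) : W (2m+1) (2c+1) = 0
  have fact_ii : ∀ m c : ℕ, ⁅⁅x 0, x (2*m+1)⁆, x (2*c+1)⁆ = 0 := by
    intro m c
    have h := hx3' (2*m) 0 (2*c+1)
    rw [pair_even (2*c+1+1) 0 (by exact ⟨c+1, by ring⟩), zero_lie] at h
    rw [pair_even (2*m+1) (2*c+1) ⟨m+c+1, by ring⟩, zero_lie] at h
    rw [pair_even (0+1) (2*c+1) ⟨c+1, by ring⟩, zero_lie] at h
    rw [pair_even (2*c+1+1) (2*m) ⟨c+m+1, by ring⟩, zero_lie] at h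
    rw [show (0:ℕ)+1 = 2*0+1 from rfl] at h
    rw [key3 m 0 (2*c+1), key3 0 (2*m) (2*c+1)] at h
    rw [show (0:ℕ) + 2*m = 2*m from by ring, show 2*m + 2*0 = 2*m from by ring] at h
    rw [key1 m (2*c+1)] at h
    apply tf2
    have h' : -⁅⁅x 0, x (2*m+1)⁆, x (2*c+1)⁆ + -⁅⁅x 0, x (2*m+1)⁆, x (2*c+1)⁆ = 0 := by
      rw [← h]; abel
    have := congrArg Neg.neg h'
    simpa [neg_add] using this
  -- Fact (iii) : W (2m+3) (2c) = 0
  have fact_iii : ∀ m c : ℕ, ⁅⁅x 0, x (2*m+3)⁆, x (2*c)⁆ = 0 := by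
    intro m c
    have h := hx3' (2*c) 1 (2*m+1)
    rw [pair_even (2*c+1) 1 ⟨c+1, by ring⟩, zero_lie] at h
    rw [pair_even (1+1) (2*c) ⟨c+1, by ring⟩, zero_lie] at h
    rw [pair_even (2*c+1) (2*m+1) ⟨c+m+1, by ring⟩, zero_lie] at h
    rw [pair_even (2*m+1+1) (2*c) ⟨m+c+1, by ring⟩, zero_lie] at h
    rw [show 2*m+1+1 = 2*(m+1) from by ring, key2 (m+1) 1 (2*c)] at h
    rw [show (1:ℕ)+1 = 2*1 from rfl, key2 1 (2*m+1) (2*c)] at h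
    rw [show 1 + 2*(m+1) = 2*m+3 from by ring, show 2*m+1+2*1 = 2*m+3 from by ring] at h
    apply tf2
    rw [← h]; abel
  -- Fact (iv) : W 1 (2c) = 0
  have fact_iv : ∀ c : ℕ, ⁅⁅x 0, x 1⁆, x (2*c)⁆ = 0 := by
    have base : ∀ c : ℕ, ⁅⁅x 1, x 0⁆, x (2*c)⁆ +  ⁅⁅x 1, x 0⁆, x (2*c)⁆ +
        (-⁅⁅x 0, x (2*c+1)⁆, x 0⁆) + (-⁅⁅x 0, x (2*c+1)⁆, x 0⁆) +
        (-⁅⁅x 0, x (2*c+1)⁆, x 0⁆) + (-⁅⁅x 0, x (2*c+1)⁆, x 0⁆) = 0 := by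
      intro c
      have h := hx3' 0 0 (2*c)
      rw [show (0:ℕ)+1 = 1 from rfl] at h
      rw [show 2*c+1 = 2*c+1 from rfl] at h
      -- t3 and t6 : ⁅⁅x (2*c+1), x 0⁆, x 0⁆ ; t4, t5 : ⁅⁅x 1, x (2*c)⁆, x 0⁆
      rw [key3 c 0 0, show (0:ℕ) + 2*c = 2*c from by ring, key1 c 0] at h
      exact h
    intro c
    have negW : ⁅⁅x 0, x 1⁆, x (2*c)⁆ = -⁅⁅x 1, x 0⁆, x (2*c)⁆ := by
      rw [← neg_lie, lie_skew]
    match c with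
    | 0 =>
      have h := base 0
      rw [show 2*0+1 = 1 from rfl] at h
      have e : ⁅⁅x 0, x 1⁆, x 0⁆ = -⁅⁅x 1, x 0⁆, x 0⁆ := by rw [← neg_lie, lie_skew]
      rw [show (2*0 : ℕ) = 0 from rfl] at negW ⊢
      have h6 : ⁅⁅x 1, x 0⁆, x 0⁆ = 0 := by
        apply tf6
        have : (⁅⁅x 1, x 0⁆, x 0⁆ : L) + ⁅⁅x 1, x 0⁆, x 0⁆ + ⁅⁅x 1, x 0⁆, x 0⁆ +
            ⁅⁅x 1, x 0⁆, x 0⁆ + ⁅⁅x 1, x 0⁆, x 0⁆ + ⁅⁅x 1, x 0⁆, x 0⁆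
            = ⁅⁅x 1, x 0⁆, x 0⁆ + ⁅⁅x 1, x 0⁆, x 0⁆ +
              (-⁅⁅x 0, x 1⁆, x 0⁆) + (-⁅⁅x 0, x 1⁆, x 0⁆) +
              (-⁅⁅x 0, x 1⁆, x 0⁆) + (-⁅⁅x 0, x 1⁆, x 0⁆) := by
          rw [e]; abel
        rw [this, h]
      rw [negW, h6, neg_zero]
    | Nat.succ k =>
      have h := base (k+1)
      have hW : ⁅⁅x 0, x (2*(k+1)+1)⁆, x 0⁆ = 0 := by
        have := fact_iii k 0
        rw [show 2*k+3 = 2*(k+1)+1 from by ring, show (2*0:ℕ) = 0 from rfl] at this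
        exact this
      rw [hW] at h
      simp only [neg_zero, add_zero] at h
      rw [negW, tf2 _ h, neg_zero]
  -- Every W m c with m odd vanishes
  have Wodd : ∀ m c : ℕ, ⁅⁅x 0, x (2*m+1)⁆, x c⁆ = 0 := by
    intro m c
    rcases Nat.even_or_odd c with ⟨j, hj⟩ | ⟨j, hj⟩
    · subst hj
      match m with
      | 0 =>
        rw [show j + j = 2*j from (two_mul j).symm]
        exact fact_iv j
      | Nat.succ k =>
        rw [show j + j = 2*j from (two_mul j).symm]
        have := fact_iii k j
        rw [show 2*k+3 = 2*(k+1)+1 from by ring] at this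
        exact this
    · subst hj
      exact fact_ii m j
  -- final assembly
  intro a b c
  rcases Nat.even_or_odd (a + b) with hab | hab
  · rw [pair_even a b hab, zero_lie]
  · rcases Nat.even_or_odd a with ⟨k, hk⟩ | ⟨k, hk⟩
    · -- a = 2k even, b odd
      have hb : ∃ j, b + 2*k = 2*j + 1 := by
        rcases hab with ⟨t, ht⟩; exact ⟨t, by omega⟩
      obtain ⟨j, hj⟩ := hb
      rw [show a = 2*k from by omega, key2 k b c, hj]
      exact Wodd j c
    · -- a = 2k+1 odd, b even
      obtain ⟨j, hj⟩ : ∃ j, b + 2*k = 2*j := by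
        rcases hab with ⟨t, ht⟩; exact ⟨(b + 2*k)/2, by omega⟩
      rw [show a = 2*k+1 from by omega, key3 k b c, hj, key1 j c]
      rw [show 2*j+1 = 2*j+1 from rfl]
      obtain ⟨j', hj'⟩ : ∃ j', (2*j : ℕ) = 2*j' := ⟨j, rfl⟩
      rw [Wodd j c, neg_zero]
end

section
/- Let K be a field of characteristic zero, L a Lie algebra over K, and x, y : ℕ → L two families such that: (a) ⁅x(r+2), x(s)⁆ + ⁅x(s+2), x(r)⁆ = 0 for all r, s ∈ ℕ; and (b) ⁅y(s+1), x(r)⁆ = ⁅y(s), x(r+1)⁆ for all s, r ∈ ℕ. Then ⁅⁅y(s), x(r₁)⁆, x(r₂)⁆ depends only on the pair (s + r₁ + r₂, r₂ mod 2): if s + r₁ + r₂ = s' + r₁' + r₂' and r₂ ≡ r₂' (mod 2), then ⁅⁅y(s), x(r₁)⁆, x(r₂)⁆ = ⁅⁅y(s'), x(r₁')⁆, x(r₂')⁆. -/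
/-- Lemma 7.14 (ii), case `(X_{ñ}^{(k)}, d_i) = (A_{2n}^{(2)}, 1)`: under relations
(x_{1,2}) (in the form (x2)) for `x` and (x_d) for the mixed brackets, the double bracket
`⁅⁅y s, x r₁⁆, x r₂⁆` depends only on `(s + r₁ + r₂, r₂ mod 2)`. -/
theorem stmt_5 (K : Type*) [Field K] [CharZero K]
    (L : Type*) [LieRing L] [LieAlgebra K L]
    (x y : ℕ → L)
    (ha : ∀ r s : ℕ, ⁅x (r + 2), x s⁆ + ⁅x (s + 2), x r⁆ = 0)
    (hb : ∀ s r : ℕ, ⁅y (s + 1), x r⁆ = ⁅y s, x (r + 1)⁆) :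
    ∀ s r₁ r₂ s' r₁' r₂' : ℕ, s + r₁ + r₂ = s' + r₁' + r₂' → r₂ % 2 = r₂' % 2 →
      ⁅⁅y s, x r₁⁆, x r₂⁆ = ⁅⁅y s', x r₁'⁆, x r₂'⁆ := by
  -- torsion-freeness
  have htf : ∀ v : L, v + v = 0 → v = 0 := by
    intro v h
    have h2 : (2 : K) • v = 0 := by rw [two_smul]; exact h
    have h3 := congrArg (fun w => (2 : K)⁻¹ • w) h2
    simpa [smul_smul] using h3
  -- the mixed bracket only depends on the sum of indices
  have hz : ∀ s r : ℕ, ⁅y s, x r⁆ = ⁅y 0, x (s + r)⁆ := by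
    intro s
    induction s with
    | zero => intro r; simp
    | succ n ih =>
        intro r
        rw [hb n r, ih (r + 1)]
        have e : n + (r + 1) = n + 1 + r := by omega
        rw [e]
  set G : ℕ → ℕ → L := fun a b => ⁅⁅y 0, x a⁆, x b⁆ with hG
  -- expansion of ⁅y t, ⁅x a, x b⁆⁆
  have hexp : ∀ t a b : ℕ, ⁅y t, ⁅x a, x b⁆⁆ = G (t + a) b - G (t + b) a := by
    intro t a b
    rw [leibniz_lie, ← lie_skew (x a) ⁅y t, x b⁆, hz t a, hz t b]
    simp [hG]
    abel
  set D : ℕ → ℕ → L := fun a b => G (a + 2) b - G a (b + 2) with hD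
  have star : ∀ t r s : ℕ, D (t + r) s + D (t + s) r = 0 := by
    intro t r s
    have h0 : ⁅y t, ⁅x (r + 2), x s⁆⁆ + ⁅y t, ⁅x (s + 2), x r⁆⁆ = 0 := by
      rw [← lie_add]; rw [ha r s]; simp
    rw [hexp t (r + 2) s, hexp t (s + 2) r] at h0
    have e1 : t + (r + 2) = t + r + 2 := by omega
    have e2 : t + (s + 2) = t + s + 2 := by omega
    rw [e1, e2] at h0
    simp only [hD]
    rw [← h0]
    abel
  have hD0 : ∀ a b : ℕ, D a b = 0 := by
    have hn0 : ∀ n : ℕ, D n 0 = 0 := by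
      intro n
      have := star n 0 0
      simp only [Nat.add_zero] at this
      exact htf _ this
    intro a b
    have := star a 0 b
    simp only [Nat.add_zero] at this
    rw [hn0 (a + b)] at this
    simpa using this
  have shift : ∀ a b : ℕ, G (a + 2) b = G a (b + 2) := by
    intro a b
    have := hD0 a b
    simp only [hD, sub_eq_zero] at this
    exact this
  have shiftk : ∀ k a b : ℕ, G (a + 2 * k) b = G a (b + 2 * k) := by
    intro k
    induction k with
    | zero => intro a b; simp
    | succ n ih =>
        intro a b
        have e1 : a + 2 * (n + 1) = (a + 2 * n) + 2 := by omega
        have e2 : b + 2 * (n + 1) = (b + 2) + 2 * n := by omega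
        rw [e1, shift (a + 2 * n) b, e2, ih a (b + 2)]
  -- main lemma about G
  have main : ∀ a b a' b' : ℕ, a + b = a' + b' → b % 2 = b' % 2 → G a b = G a' b' := by
    have aux : ∀ a b a' b' : ℕ, a + b = a' + b' → b % 2 = b' % 2 → b ≤ b' → G a b = G a' b' := by
      intro a b a' b' hsum hpar hle
      obtain ⟨k, hk⟩ : ∃ k, b' = b + 2 * k := ⟨(b' - b) / 2, by omega⟩
      have hak : a = a' + 2 * k := by omega
      rw [hak, hk, shiftk k a' b]
    intro a b a' b' hsum hpar
    rcases le_total b b' with h | h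
    · exact aux a b a' b' hsum hpar h
    · exact (aux a' b' a b hsum.symm hpar.symm h).symm
  intro s r₁ r₂ s' r₁' r₂' hsum hpar
  rw [hz s r₁, hz s' r₁']
  exact main (s + r₁) r₂ (s' + r₁') r₂' (by omega) hpar
end

section
/- Let L be a Lie algebra over a commutative ring, k ≥ 1 a natural number, and x, y : ℕ → L two families such that: (a) ⁅x(a), x(b)⁆ = 0 for all a, b ∈ ℕ; and (b) ⁅y(s+1), x(r)⁆ = ⁅y(s), x(r+k)⁆ for all s, r ∈ ℕ. Then ⁅⁅y(s), x(r₁)⁆, x(r₂)⁆ depends only on the pair (k·s + r₁ + r₂, r₂ mod k): if k·s + r₁ + r₂ = k·s' + r₁' + r₂' and r₂ ≡ r₂' (mod k), then ⁅⁅y(s), x(r₁)⁆, x(r₂)⁆ = ⁅⁅y(s'), x(r₁')⁆, x(r₂')⁆. -/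
/-- Lemma 7.14 (ii), case `1 = d̃_i < d̃_j = k` (rescaled): if all brackets `⁅x a, x b⁆`
vanish and `⁅y (s+1), x r⁆ = ⁅y s, x (r+k)⁆`, then `⁅⁅y s, x r₁⁆, x r₂⁆` depends only on
the pair `(k·s + r₁ + r₂, r₂ mod k)`. -/
theorem stmt_6 (R : Type*) [CommRing R]
    (L : Type*) [LieRing L] [LieAlgebra R L]
    (k : ℕ) (hk : 1 ≤ k) (x y : ℕ → L)
    (ha : ∀ a b : ℕ, ⁅x a, x b⁆ = 0)
    (hb : ∀ s r : ℕ, ⁅y (s + 1), x r⁆ = ⁅y s, x (r + k)⁆) :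
    ∀ s r₁ r₂ s' r₁' r₂' : ℕ,
      k * s + r₁ + r₂ = k * s' + r₁' + r₂' → r₂ % k = r₂' % k →
      ⁅⁅y s, x r₁⁆, x r₂⁆ = ⁅⁅y s', x r₁'⁆, x r₂'⁆ := by
  -- Lemma A: ⁅y s, x r⁆ = ⁅y 0, x (k*s + r)⁆
  have hA : ∀ s r : ℕ, ⁅y s, x r⁆ = ⁅y 0, x (k * s + r)⁆ := by
    intro s
    induction s with
    | zero => intro r; simp
    | succ n ih =>
      intro r
      rw [hb n r, ih (r + k)]
      ring_nf
  -- Lemma B: symmetry in r₁, r₂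
  have hB : ∀ s r₁ r₂ : ℕ, ⁅⁅y s, x r₁⁆, x r₂⁆ = ⁅⁅y s, x r₂⁆, x r₁⁆ := by
    intro s r₁ r₂
    rw [lie_lie, ha, lie_zero, zero_sub, lie_skew]
  -- Lemma C: move multiples of k from r₂ into s
  have hC : ∀ q s r₁ r₂ : ℕ, ⁅⁅y s, x r₁⁆, x (k * q + r₂)⁆ = ⁅⁅y (s + q), x r₁⁆, x r₂⁆ := by
    intro q
    induction q with
    | zero => intro s r₁ r₂; simp
    | succ n ih =>
      intro s r₁ r₂
      have h1 : k * (n + 1) + r₂ = k * n + (r₂ + k) := by ring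
      have h2 : s + (n + 1) = (s + n) + 1 := by ring
      rw [h1, ih, hB, ← hb, hB, h2]
  intro s r₁ r₂ s' r₁' r₂' hsum hmod
  set t := r₂ % k with ht
  have hr₂ : r₂ = k * (r₂ / k) + t := (Nat.div_add_mod r₂ k).symm
  have hr₂' : r₂' = k * (r₂' / k) + t := by
    rw [hmod]; exact (Nat.div_add_mod r₂' k).symm
  rw [hr₂, hr₂', hC, hC, hA (s + r₂ / k) r₁, hA (s' + r₂' / k) r₁']
  have hsum' : k * s + r₁ + (k * (r₂ / k) + t) = k * s' + r₁' + (k * (r₂' / k) + t) := by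
    rw [← hr₂, ← hr₂']; exact hsum
  have : k * (s + r₂ / k) + r₁ = k * (s' + r₂' / k) + r₁' := by
    rw [Nat.mul_add, Nat.mul_add]; linarith
  rw [this]
end

section
/- Let K be a field of characteristic zero, L a Lie algebra over K, and x, y : ℕ → L two families such that ⁅x(a), x(b)⁆ = 0 for all a, b ∈ ℕ and ⁅y(s+1), x(r)⁆ = ⁅y(s), x(r+2)⁆ for all s, r ∈ ℕ. Then the following two conditions are equivalent: (A) for all s, r₁, r₂ ∈ ℕ, ⁅⁅y(s), x(r₁+1)⁆, x(r₂)⁆ + ⁅⁅y(s), x(r₂+1)⁆, x(r₁)⁆ = 0; (B) for all s ∈ ℕ, ⁅⁅y(s), x(1)⁆, x(0)⁆ = 0 and ⁅⁅y(s), x(1)⁆, x(1)⁆ + ⁅⁅y(s+1), x(0)⁆, x(0)⁆ = 0. -/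
section Aux

variable {K : Type*} [Field K] [CharZero K]
    {L : Type*} [LieRing L] [LieAlgebra K L]
    (x y : ℕ → L)

private lemma symm_aux (ha : ∀ a b : ℕ, ⁅x a, x b⁆ = 0) (s a b : ℕ) :
    ⁅⁅y s, x a⁆, x b⁆ = ⁅⁅y s, x b⁆, x a⁆ := by
  have h1 : ⁅⁅y s, x a⁆, x b⁆ = ⁅y s, ⁅x a, x b⁆⁆ - ⁅x a, ⁅y s, x b⁆⁆ := lie_lie _ _ _
  rw [h1, ha, lie_zero, zero_sub, ← lie_skew, neg_neg]

private lemma key_aux (ha : ∀ a b : ℕ, ⁅x a, x b⁆ = 0)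
    (hb : ∀ s r : ℕ, ⁅y (s + 1), x r⁆ = ⁅y s, x (r + 2)⁆)
    (h10 : ∀ s : ℕ, ⁅⁅y s, x 1⁆, x 0⁆ = 0)
    (h11 : ∀ s : ℕ, ⁅⁅y s, x 1⁆, x 1⁆ + ⁅⁅y s, x 2⁆, x 0⁆ = 0) :
    ∀ n s r₁ r₂ : ℕ, r₁ + r₂ ≤ n →
      ⁅⁅y s, x (r₁ + 1)⁆, x r₂⁆ + ⁅⁅y s, x (r₂ + 1)⁆, x r₁⁆ = 0 := by
  have h21 : ∀ s : ℕ, ⁅⁅y s, x 2⁆, x 1⁆ = 0 := by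
    intro s
    have h := h10 (s + 1)
    rw [symm_aux x y ha (s+1) 1 0, hb] at h
    simpa using h
  intro n
  induction n with
  | zero =>
    intro s r₁ r₂ h
    obtain ⟨rfl, rfl⟩ : r₁ = 0 ∧ r₂ = 0 := by omega
    simp [h10 s]
  | succ n ih =>
    intro s r₁ r₂ h
    rcases Nat.lt_or_ge r₂ 2 with h2 | h2
    · rcases Nat.lt_or_ge r₁ 2 with h1 | h1
      · interval_cases r₁ <;> interval_cases r₂
        · simp [h10 s]
        · simp only [Nat.reduceAdd]; exact h11 s
        · rw [add_comm]; simp only [Nat.reduceAdd]; exact h11 s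
        · simp [h21 s]
      · -- r₁ ≥ 2, reduce r₁
        obtain ⟨m, rfl⟩ : ∃ m, r₁ = m + 2 := ⟨r₁ - 2, by omega⟩
        have e1 : ⁅⁅y s, x (m + 2 + 1)⁆, x r₂⁆ = ⁅⁅y (s+1), x (m + 1)⁆, x r₂⁆ := by
          have hm : m + 2 + 1 = m + 1 + 2 := by omega
          rw [hm, ← hb]
        have e2 : ⁅⁅y s, x (r₂ + 1)⁆, x (m + 2)⁆ = ⁅⁅y (s+1), x (r₂ + 1)⁆, x m⁆ := by
          rw [symm_aux x y ha s (r₂+1) (m+2), ← hb, symm_aux x y ha (s+1) m (r₂+1)]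
        rw [e1, e2]
        exact ih (s+1) m r₂ (by omega)
    · -- r₂ ≥ 2, reduce r₂
      obtain ⟨m, rfl⟩ : ∃ m, r₂ = m + 2 := ⟨r₂ - 2, by omega⟩
      have e1 : ⁅⁅y s, x (m + 2 + 1)⁆, x r₁⁆ = ⁅⁅y (s+1), x (m + 1)⁆, x r₁⁆ := by
        have hm : m + 2 + 1 = m + 1 + 2 := by omega
        rw [hm, ← hb]
      have e2 : ⁅⁅y s, x (r₁ + 1)⁆, x (m + 2)⁆ = ⁅⁅y (s+1), x (r₁ + 1)⁆, x m⁆ := by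
        rw [symm_aux x y ha s (r₁+1) (m+2), ← hb, symm_aux x y ha (s+1) m (r₁+1)]
      rw [e1, e2, add_comm]
      exact ih (s+1) m r₁ (by omega)

end Aux

/-- Proposition 7.15 (case `k = 2`, `a_{ij} = −2`, `X_{ñ}^{(k)} ≠ A_{2n}^{(2)}`, rescaled):
under relations (x_{1,2}) and (x_d), relation (t2) is equivalent to relations (t₂') and (t₂''). -/
theorem stmt_7 (K : Type*) [Field K] [CharZero K]
    (L : Type*) [LieRing L] [LieAlgebra K L]
    (x y : ℕ → L)
    (ha : ∀ a b : ℕ, ⁅x a, x b⁆ = 0)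
    (hb : ∀ s r : ℕ, ⁅y (s + 1), x r⁆ = ⁅y s, x (r + 2)⁆) :
    (∀ s r₁ r₂ : ℕ, ⁅⁅y s, x (r₁ + 1)⁆, x r₂⁆ + ⁅⁅y s, x (r₂ + 1)⁆, x r₁⁆ = 0) ↔
    ((∀ s : ℕ, ⁅⁅y s, x 1⁆, x 0⁆ = 0) ∧
     (∀ s : ℕ, ⁅⁅y s, x 1⁆, x 1⁆ + ⁅⁅y (s + 1), x 0⁆, x 0⁆ = 0)) := by
  constructor
  · intro hA
    constructor
    · intro s
      have h := hA s 0 0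
      simp only [zero_add] at h
      have h2 : (2 : K) • ⁅⁅y s, x 1⁆, x 0⁆ = 0 := by
        rw [two_smul]; exact h
      exact (smul_eq_zero.mp h2).resolve_left two_ne_zero
    · intro s
      have h := hA s 0 1
      rw [hb s 0]
      simp only [Nat.reduceAdd] at h; exact h
  · rintro ⟨h10, h11⟩
    have h11' : ∀ s : ℕ, ⁅⁅y s, x 1⁆, x 1⁆ + ⁅⁅y s, x 2⁆, x 0⁆ = 0 := by
      intro s
      have h := h11 s
      rw [hb s 0] at h
      simp only [Nat.reduceAdd] at h; exact h
    intro s r₁ r₂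
    exact key_aux x y ha hb h10 h11' (r₁ + r₂) s r₁ r₂ le_rfl
end

section
/- Let K be a field of characteristic zero, L a Lie algebra over K, and x, y : ℕ → L two families such that ⁅x(r+2), x(s)⁆ + ⁅x(s+2), x(r)⁆ = 0 for all r, s ∈ ℕ and ⁅y(s+1), x(r)⁆ = ⁅y(s), x(r+1)⁆ for all s, r ∈ ℕ. Then the following two conditions are equivalent: (A) for all s, r₁, r₂ ∈ ℕ, ⁅⁅y(s), x(r₁+1)⁆, x(r₂)⁆ + ⁅⁅y(s), x(r₂)⁆, x(r₁+1)⁆ + ⁅⁅y(s), x(r₂+1)⁆, x(r₁)⁆ + ⁅⁅y(s), x(r₁)⁆, x(r₂+1)⁆ = 0; (B) for all s ∈ ℕ, ⁅⁅y(s), x(0)⁆, x(1)⁆ + ⁅⁅y(s+1), x(0)⁆, x(0)⁆ = 0. -/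
/-- Proposition 7.16 (case `a_{ij} = −2`, `X_{ñ}^{(k)} = A_{2n}^{(2)}`): under relations
(x_{1,2}) (the `A_{2n}^{(2)}` form, for `x`) and (x_d), relation (s2) is equivalent to
relation (s_2). -/
theorem stmt_8 (K : Type*) [Field K] [CharZero K]
    (L : Type*) [LieRing L] [LieAlgebra K L]
    (x y : ℕ → L)
    (ha : ∀ r s : ℕ, ⁅x (r + 2), x s⁆ + ⁅x (s + 2), x r⁆ = 0)
    (hb : ∀ s r : ℕ, ⁅y (s + 1), x r⁆ = ⁅y s, x (r + 1)⁆) :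
    (∀ s r₁ r₂ : ℕ,
      ⁅⁅y s, x (r₁ + 1)⁆, x r₂⁆ + ⁅⁅y s, x r₂⁆, x (r₁ + 1)⁆ +
      ⁅⁅y s, x (r₂ + 1)⁆, x r₁⁆ + ⁅⁅y s, x r₁⁆, x (r₂ + 1)⁆ = 0) ↔
    (∀ s : ℕ, ⁅⁅y s, x 0⁆, x 1⁆ + ⁅⁅y (s + 1), x 0⁆, x 0⁆ = 0) := by
  -- dividing by two in a char-zero vector space
  have half : ∀ z w : L, z + z = w + w → z = w := by
    intro z w h
    have h2 : (2 : K) • z = (2 : K) • w := by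
      rw [two_smul, two_smul]; exact h
    exact smul_right_injective L two_ne_zero h2
  constructor
  · intro hA s
    have h2 := hA s 0 0
    rw [hb s 0]
    apply half _ (0 : L)
    rw [add_zero]
    calc ⁅⁅y s, x 0⁆, x 1⁆ + ⁅⁅y s, x 1⁆, x 0⁆ +
          (⁅⁅y s, x 0⁆, x 1⁆ + ⁅⁅y s, x 1⁆, x 0⁆)
        = ⁅⁅y s, x (0 + 1)⁆, x 0⁆ + ⁅⁅y s, x 0⁆, x (0 + 1)⁆ +
          ⁅⁅y s, x (0 + 1)⁆, x 0⁆ + ⁅⁅y s, x 0⁆, x (0 + 1)⁆ := by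
          norm_num; abel
      _ = 0 := h2
  · intro hB
    -- everything depends only on the sum of the first two indices
    have hw : ∀ s a b : ℕ, ⁅⁅y s, x a⁆, x b⁆ = ⁅⁅y 0, x (s + a)⁆, x b⁆ := by
      intro s
      induction s with
      | zero => intro a b; rw [Nat.zero_add]
      | succ n ih =>
        intro a b
        rw [hb n a, ih (a + 1) b, show n + (a + 1) = n + 1 + a by omega]
    -- the base relation (B) in `G` form
    have hG0 : ∀ s : ℕ, ⁅⁅y 0, x s⁆, x 1⁆ + ⁅⁅y 0, x (s + 1)⁆, x 0⁆ = 0 := by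
      intro s
      have h := hB s
      rw [hw s 0 1, hw (s + 1) 0 0, Nat.add_zero, Nat.add_zero] at h
      exact h
    -- Jacobi identity in the convenient form
    have hkey : ∀ s a b : ℕ, ⁅y s, ⁅x a, x b⁆⁆ =
        ⁅⁅y s, x a⁆, x b⁆ - ⁅⁅y s, x b⁆, x a⁆ := by
      intro s a b
      rw [leibniz_lie, ← lie_skew (x a) ⁅y s, x b⁆]
      abel
    -- the relation obtained by bracketing `ha` with `y s`
    have hE : ∀ s r t : ℕ,
        ⁅⁅y 0, x (s + r + 2)⁆, x t⁆ + ⁅⁅y 0, x (s + t + 2)⁆, x r⁆ =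
        ⁅⁅y 0, x (s + r)⁆, x (t + 2)⁆ + ⁅⁅y 0, x (s + t)⁆, x (r + 2)⁆ := by
      intro s r t
      have h0 : ⁅y s, ⁅x (r + 2), x t⁆ + ⁅x (t + 2), x r⁆⁆ = (0 : L) := by
        rw [ha r t]; simp
      rw [lie_add, hkey s (r + 2) t, hkey s (t + 2) r,
        hw s (r + 2) t, hw s t (r + 2), hw s (t + 2) r, hw s r (t + 2),
        show s + (r + 2) = s + r + 2 by omega, show s + (t + 2) = s + t + 2 by omega] at h0
      rw [← sub_eq_zero]
      rw [← h0]; abel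
    -- top relation
    have htop : ∀ s : ℕ, ⁅⁅y 0, x (s + 2)⁆, x 0⁆ = ⁅⁅y 0, x s⁆, x 2⁆ := by
      intro s
      have h := hE s 0 0
      rw [Nat.add_zero] at h
      exact half _ _ h
    -- the shifting relation
    have hR : ∀ a b : ℕ, ⁅⁅y 0, x (a + 2)⁆, x b⁆ = ⁅⁅y 0, x a⁆, x (b + 2)⁆ := by
      intro a b
      have h := hE a 0 b
      rw [Nat.add_zero, htop (a + b)] at h
      exact add_right_cancel h
    -- the main relation, by two-step induction
    have hC : ∀ b a : ℕ, ⁅⁅y 0, x a⁆, x (b + 1)⁆ + ⁅⁅y 0, x (a + 1)⁆, x b⁆ = 0 := by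
      intro b
      induction b using Nat.twoStepInduction with
      | zero => exact hG0
      | one =>
        intro a
        rw [← htop a, add_comm]
        have h := hG0 (a + 1)
        rwa [show a + 1 + 1 = a + 2 by omega] at h
      | more b ih _ =>
        intro a
        rw [show b + 2 + 1 = b + 1 + 2 by omega, ← hR a (b + 1), ← hR (a + 1) b]
        have h := ih (a + 2)
        rwa [show a + 2 + 1 = a + 1 + 2 by omega] at h
    intro s r₁ r₂
    rw [hw s (r₁ + 1) r₂, hw s r₂ (r₁ + 1), hw s (r₂ + 1) r₁, hw s r₁ (r₂ + 1),
      show s + (r₁ + 1) = s + r₁ + 1 by omega, show s + (r₂ + 1) = s + r₂ + 1 by omega]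
    have h1 := hC r₂ (s + r₁)
    have h2 := hC r₁ (s + r₂)
    calc ⁅⁅y 0, x (s + r₁ + 1)⁆, x r₂⁆ + ⁅⁅y 0, x (s + r₂)⁆, x (r₁ + 1)⁆ +
          ⁅⁅y 0, x (s + r₂ + 1)⁆, x r₁⁆ + ⁅⁅y 0, x (s + r₁)⁆, x (r₂ + 1)⁆
        = (⁅⁅y 0, x (s + r₁)⁆, x (r₂ + 1)⁆ + ⁅⁅y 0, x (s + r₁ + 1)⁆, x r₂⁆) +
          (⁅⁅y 0, x (s + r₂)⁆, x (r₁ + 1)⁆ + ⁅⁅y 0, x (s + r₂ + 1)⁆, x r₁⁆) := by abel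
      _ = 0 := by rw [h1, h2, add_zero]
end

section
/- Let K be a field of characteristic zero, L a Lie algebra over K, and x, y : ℕ → L two families such that ⁅x(a), x(b)⁆ = 0 for all a, b ∈ ℕ and ⁅y(s+1), x(r)⁆ = ⁅y(s), x(r+3)⁆ for all s, r ∈ ℕ. Then the following two conditions are equivalent: (A) for all s, r₁, r₂ ∈ ℕ, 2⁅⁅y(s), x(r₁+2)⁆, x(r₂)⁆ + ⁅⁅y(s), x(r₁+1)⁆, x(r₂+1)⁆ + 2⁅⁅y(s), x(r₂+2)⁆, x(r₁)⁆ + ⁅⁅y(s), x(r₂+1)⁆, x(r₁+1)⁆ = 0; (B) for all s, r₁, r₂ ∈ ℕ, ⁅⁅y(s), x(r₁+2)⁆, x(r₂)⁆ + ⁅⁅y(s), x(r₁+1)⁆, x(r₂+1)⁆ + ⁅⁅y(s), x(r₁)⁆, x(r₂+2)⁆ = 0. -/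
/-- Lemma 7.17 (case `k = 3`, `a_{ij} = −3`, rescaled): under relations (x_{1,2}) and (x_d),
relation (t3) is equivalent to relation (t̃3). -/
theorem stmt_9 (K : Type*) [Field K] [CharZero K]
    (L : Type*) [LieRing L] [LieAlgebra K L]
    (x y : ℕ → L)
    (ha : ∀ a b : ℕ, ⁅x a, x b⁆ = 0)
    (hb : ∀ s r : ℕ, ⁅y (s + 1), x r⁆ = ⁅y s, x (r + 3)⁆) :
    (∀ s r₁ r₂ : ℕ,
      2 • ⁅⁅y s, x (r₁ + 2)⁆, x r₂⁆ + ⁅⁅y s, x (r₁ + 1)⁆, x (r₂ + 1)⁆ +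
      2 • ⁅⁅y s, x (r₂ + 2)⁆, x r₁⁆ + ⁅⁅y s, x (r₂ + 1)⁆, x (r₁ + 1)⁆ = 0) ↔
    (∀ s r₁ r₂ : ℕ,
      ⁅⁅y s, x (r₁ + 2)⁆, x r₂⁆ + ⁅⁅y s, x (r₁ + 1)⁆, x (r₂ + 1)⁆ +
      ⁅⁅y s, x r₁⁆, x (r₂ + 2)⁆ = 0) := by
  have key : ∀ s a b : ℕ, ⁅⁅y s, x a⁆, x b⁆ = ⁅⁅y s, x b⁆, x a⁆ := by
    intro s a b
    rw [lie_lie, ha, lie_zero, zero_sub, ← lie_skew, neg_neg]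
  constructor
  · intro h s r₁ r₂
    have h1 := h s r₁ r₂
    rw [key s (r₂ + 2) r₁, key s (r₂ + 1) (r₁ + 1)] at h1
    have h2 : (2 : ℕ) • (⁅⁅y s, x (r₁ + 2)⁆, x r₂⁆ + ⁅⁅y s, x (r₁ + 1)⁆, x (r₂ + 1)⁆ +
        ⁅⁅y s, x r₁⁆, x (r₂ + 2)⁆) = 0 := by
      rw [smul_add, smul_add, two_smul, two_smul, two_smul]
      rw [two_smul, two_smul] at h1
      linear_combination (norm := abel) h1
    have h3 : ((2 : ℕ) : K) • (⁅⁅y s, x (r₁ + 2)⁆, x r₂⁆ + ⁅⁅y s, x (r₁ + 1)⁆, x (r₂ + 1)⁆ +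
        ⁅⁅y s, x r₁⁆, x (r₂ + 2)⁆) = 0 := by
      rw [Nat.cast_smul_eq_nsmul]; exact h2
    rcases smul_eq_zero.mp h3 with h | h
    · exact absurd h (by norm_num)
    · exact h
  · intro h s r₁ r₂
    have h1 := h s r₁ r₂
    rw [key s r₁ (r₂ + 2)] at h1
    rw [key s (r₂ + 1) (r₁ + 1), two_smul, two_smul]
    linear_combination (norm := abel) h1 + h1
end

section
/- Let K be a field of characteristic zero, L a Lie algebra over K, and x, y : ℕ → L two families such that ⁅x(a), x(b)⁆ = 0 for all a, b ∈ ℕ and ⁅y(s+1), x(r)⁆ = ⁅y(s), x(r+3)⁆ for all s, r ∈ ℕ. Assume that for all s ∈ ℕ: (t₃') ⁅⁅y(s), x(1)⁆, x(1)⁆ = −2⁅⁅y(s), x(2)⁆, x(0)⁆; (t₃'') 2⁅⁅y(s), x(2)⁆, x(1)⁆ = −⁅⁅y(s+1), x(0)⁆, x(0)⁆; (t₃''') ⁅⁅y(s), x(2)⁆, x(2)⁆ = −2⁅⁅y(s+1), x(1)⁆, x(0)⁆. Then for all s, r₁, r₂ ∈ ℕ, ⁅⁅y(s), x(r₁+2)⁆,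 x(r₂)⁆ + ⁅⁅y(s), x(r₁+1)⁆, x(r₂+1)⁆ + ⁅⁅y(s), x(r₁)⁆, x(r₂+2)⁆ = 0. -/
/-- Abstract combinatorial core of Proposition 7.20, case `k = 3`. -/
theorem aux_t3 {V : Type*} [AddCommGroup V] (C : ℕ → ℕ → V)
    (hsym : ∀ s a b : ℕ, C (3 * s + a) b = C (3 * s + b) a)
    (h1 : ∀ s : ℕ, C (3 * s + 1) 1 = -(2 • C (3 * s + 2) 0))
    (h2 : ∀ s : ℕ, 2 • C (3 * s + 2) 1 = -C (3 * s + 3) 0)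
    (h3 : ∀ s : ℕ, C (3 * s + 2) 2 = -(2 • C (3 * s + 4) 0)) :
    ∀ n m : ℕ, C (m + 2) n + C (m + 1) (n + 1) + C m (n + 2) = 0 := by
  have hshift : ∀ m n : ℕ, C (m + 3) n = C m (n + 3) := by
    intro m n
    have e1 := hsym 1 m n
    rw [show 3 * 1 + m = m + 3 by ring, show 3 * 1 + n = n + 3 by ring] at e1
    have e2 := hsym 0 (n + 3) m
    rw [show 3 * 0 + (n + 3) = n + 3 by ring, show 3 * 0 + m = m by ring] at e2
    rw [e1, e2]
  have base : ∀ m : ℕ, C (m + 2) 0 + C (m + 1) 1 + C m 2 = 0 := by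
    intro m
    obtain ⟨s, hs⟩ : ∃ s, m = 3 * s ∨ m = 3 * s + 1 ∨ m = 3 * s + 2 := ⟨m / 3, by omega⟩
    rcases hs with rfl | rfl | rfl
    · have e : C (3 * s) 2 = C (3 * s + 2) 0 := by
        have h := hsym s 0 2
        rwa [show 3 * s + 0 = 3 * s by ring] at h
      rw [e, h1 s]
      abel
    · rw [show 3 * s + 1 + 2 = 3 * s + 3 by ring, show 3 * s + 1 + 1 = 3 * s + 2 by ring]
      have e : C (3 * s + 1) 2 = C (3 * s + 2) 1 := hsym s 1 2
      have e2 : C (3 * s + 3) 0 = -(2 • C (3 * s + 2) 1) := by rw [h2 s, neg_neg]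
      rw [e, e2]
      abel
    · rw [show 3 * s + 2 + 2 = 3 * s + 4 by ring, show 3 * s + 2 + 1 = 3 * s + 3 by ring]
      have e : C (3 * s + 3) 1 = C (3 * s + 4) 0 := by
        have h := hsym (s + 1) 0 1
        rwa [show 3 * (s + 1) + 0 = 3 * s + 3 by ring,
          show 3 * (s + 1) + 1 = 3 * s + 4 by ring] at h
      rw [e, h3 s]
      abel
  intro n
  induction n with
  | zero => exact base
  | succ n ih =>
    intro m
    have e : C m (n + 1 + 2) = C (m + 3) n := by
      rw [hshift, show n + 1 + 2 = n + 3 by ring]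
    have h := ih (m + 1)
    rw [show m + 1 + 2 = m + 3 by ring, show m + 1 + 1 = m + 2 by ring] at h
    calc C (m + 2) (n + 1) + C (m + 1) (n + 1 + 1) + C m (n + 1 + 2)
        = C (m + 3) n + C (m + 2) (n + 1) + C (m + 1) (n + 2) := by
          rw [e, show n + 1 + 1 = n + 2 by ring]; abel
      _ = 0 := h

/-- Proposition 7.20 (case `k = 3`, `a_{ij} = −3`, rescaled): under relations (x_{1,2}) and
(x_d), relations (t₃'), (t₃''), (t₃''') imply relation (t̃3). -/
theorem stmt_10 (K : Type*) [Field K] [CharZero K]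
    (L : Type*) [LieRing L] [LieAlgebra K L]
    (x y : ℕ → L)
    (ha : ∀ a b : ℕ, ⁅x a, x b⁆ = 0)
    (hb : ∀ s r : ℕ, ⁅y (s + 1), x r⁆ = ⁅y s, x (r + 3)⁆)
    (ht3' : ∀ s : ℕ, ⁅⁅y s, x 1⁆, x 1⁆ = -(2 • ⁅⁅y s, x 2⁆, x 0⁆))
    (ht3'' : ∀ s : ℕ, 2 • ⁅⁅y s, x 2⁆, x 1⁆ = -⁅⁅y (s + 1), x 0⁆, x 0⁆)
    (ht3''' : ∀ s : ℕ, ⁅⁅y s, x 2⁆, x 2⁆ = -(2 • ⁅⁅y (s + 1), x 1⁆, x 0⁆)) :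
    ∀ s r₁ r₂ : ℕ,
      ⁅⁅y s, x (r₁ + 2)⁆, x r₂⁆ + ⁅⁅y s, x (r₁ + 1)⁆, x (r₂ + 1)⁆ +
      ⁅⁅y s, x r₁⁆, x (r₂ + 2)⁆ = 0 := by
  -- ⁅y s, x r⁆ depends only on 3 s + r
  have hz : ∀ s r : ℕ, ⁅y s, x r⁆ = ⁅y 0, x (3 * s + r)⁆ := by
    intro s
    induction s with
    | zero => intro r; rw [show 3 * 0 + r = r by ring]
    | succ n ih =>
      intro r
      rw [hb n r, ih (r + 3), show 3 * n + (r + 3) = 3 * (n + 1) + r by ring]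
  -- symmetry in the two x-arguments
  have hsymS : ∀ s a b : ℕ, ⁅⁅y s, x a⁆, x b⁆ = ⁅⁅y s, x b⁆, x a⁆ := by
    intro s a b
    rw [lie_lie, ha, lie_zero, zero_sub, lie_skew]
  set C : ℕ → ℕ → L := fun m n => ⁅⁅y 0, x m⁆, x n⁆ with hC
  have hsym : ∀ s a b : ℕ, C (3 * s + a) b = C (3 * s + b) a := by
    intro s a b
    simp only [hC, ← hz]
    exact hsymS s a b
  have h1 : ∀ s : ℕ, C (3 * s + 1) 1 = -(2 • C (3 * s + 2) 0) := by
    intro s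
    simp only [hC, ← hz]
    exact ht3' s
  have h2 : ∀ s : ℕ, 2 • C (3 * s + 2) 1 = -C (3 * s + 3) 0 := by
    intro s
    have h := ht3'' s
    rw [hz s 2, hz (s + 1) 0, show 3 * (s + 1) + 0 = 3 * s + 3 by ring] at h
    exact h
  have h3 : ∀ s : ℕ, C (3 * s + 2) 2 = -(2 • C (3 * s + 4) 0) := by
    intro s
    have h := ht3''' s
    rw [hz s 2, hz (s + 1) 1, show 3 * (s + 1) + 1 = 3 * s + 4 by ring] at h
    exact h
  intro s r₁ r₂
  have main := aux_t3 C hsym h1 h2 h3 r₂ (3 * s + r₁)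
  rw [hz s (r₁ + 2), hz s (r₁ + 1), hz s r₁,
    show 3 * s + (r₁ + 2) = 3 * s + r₁ + 2 by ring,
    show 3 * s + (r₁ + 1) = 3 * s + r₁ + 1 by ring]
  exact main
end

section
/- Let K be a field of characteristic zero, L a Lie algebra over K, and x, y : ℕ → L two families such that ⁅x(a), x(b)⁆ = 0 for all a, b ∈ ℕ and ⁅y(s+1), x(r)⁆ = ⁅y(s), x(r+3)⁆ for all s, r ∈ ℕ, and assume that for all s ∈ ℕ: ⁅⁅y(s), x(1)⁆, x(1)⁆ = −2⁅⁅y(s), x(2)⁆, x(0)⁆, 2⁅⁅y(s), x(2)⁆, x(1)⁆ = −⁅⁅y(s+1), x(0)⁆, x(0)⁆, and ⁅⁅y(s), x(2)⁆, x(2)⁆ = −2⁅⁅y(s+1), x(1)⁆, x(0)⁆. Then for every s ≥ 1 one has ⁅⁅⁅y(s), x(1)⁆, x(0)⁆, x(0)⁆ = 0 and ⁅⁅⁅y(s), x(2)⁆, x(0)⁆, x(0)⁆ = 0. -/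
/-- Remark 7.21 (case `k = 3`, `a_{ij} = −3`, rescaled): under relations (x_{1,2}), (x_d),
(t₃'), (t₃''), (t₃'''), for every `s ≥ 1` one has
`⁅⁅⁅y s, x 1⁆, x 0⁆, x 0⁆ = 0` and `⁅⁅⁅y s, x 2⁆, x 0⁆, x 0⁆ = 0`. -/
theorem stmt_11 (K : Type*) [Field K] [CharZero K]
    (L : Type*) [LieRing L] [LieAlgebra K L]
    (x y : ℕ → L)
    (ha : ∀ a b : ℕ, ⁅x a, x b⁆ = 0)
    (hb : ∀ s r : ℕ, ⁅y (s + 1), x r⁆ = ⁅y s, x (r + 3)⁆)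
    (ht3' : ∀ s : ℕ, ⁅⁅y s, x 1⁆, x 1⁆ = -(2 • ⁅⁅y s, x 2⁆, x 0⁆))
    (ht3'' : ∀ s : ℕ, 2 • ⁅⁅y s, x 2⁆, x 1⁆ = -⁅⁅y (s + 1), x 0⁆, x 0⁆)
    (ht3''' : ∀ s : ℕ, ⁅⁅y s, x 2⁆, x 2⁆ = -(2 • ⁅⁅y (s + 1), x 1⁆, x 0⁆)) :
    ∀ s : ℕ, 1 ≤ s →
      ⁅⁅⁅y s, x 1⁆, x 0⁆, x 0⁆ = 0 ∧ ⁅⁅⁅y s, x 2⁆, x 0⁆, x 0⁆ = 0 := by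
  -- nsmul pulls out of the first slot of a bracket
  have nsl : ∀ (n : ℕ) (a b : L), ⁅n • a, b⁆ = n • ⁅a, b⁆ := by
    intro n a b
    induction n with
    | zero => simp
    | succ k ih => rw [succ_nsmul, succ_nsmul, add_lie, ih]
  -- symmetry of the two outer bracket slots
  have swap : ∀ (z : L) (a b : ℕ), ⁅⁅z, x a⁆, x b⁆ = ⁅⁅z, x b⁆, x a⁆ := by
    intro z a b
    have h := leibniz_lie z (x a) (x b)
    rw [ha, lie_zero] at h
    have h2 : ⁅x a, ⁅z, x b⁆⁆ = -⁅⁅z, x b⁆, x a⁆ := by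
      rw [← lie_skew]
    rw [h2] at h
    exact add_neg_eq_zero.mp h.symm
  -- from 9 • v = 0 deduce v = 0
  have nine : ∀ v : L, (9 : ℕ) • v = 0 → v = 0 := by
    intro v hv
    have h9 : ((9 : ℕ) : K) • v = 0 := by
      rw [Nat.cast_smul_eq_nsmul]; exact hv
    rcases smul_eq_zero.mp h9 with h | h
    · exact absurd h (by norm_num)
    · exact h
  -- key fact 1 : ⁅⁅⁅y s, x 4⁆, x 0⁆, x 0⁆ = 0 for all s
  have key1 : ∀ s : ℕ, ⁅⁅⁅y s, x 4⁆, x 0⁆, x 0⁆ = 0 := by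
    intro s
    set A := ⁅⁅⁅y s, x 4⁆, x 0⁆, x 0⁆ with hA
    -- T s 3 1 0 = A
    have e1 : ⁅⁅⁅y s, x 3⁆, x 1⁆, x 0⁆ = A := by
      rw [show (3 : ℕ) = 0 + 3 by norm_num, ← hb s 0,
        show ⁅⁅⁅y (s+1), x 0⁆, x 1⁆, x 0⁆ = ⁅⁅⁅y (s+1), x 1⁆, x 0⁆, x 0⁆ from
          congrArg (fun z => ⁅z, x 0⁆) (swap (y (s+1)) 0 1),
        hb s 1]
    -- 2 • T s 2 1 1 = -A
    have e2 : 2 • ⁅⁅⁅y s, x 2⁆, x 1⁆, x 1⁆ = -A := by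
      have h := congrArg (fun z => ⁅z, x 1⁆) (ht3'' s)
      simp only [nsl, neg_lie] at h
      rw [h, hb s 0]
      rw [swap ⁅y s, x (0+3)⁆ 0 1, e1]
    -- T s 2 2 0 = -(2 • A)
    have e3 : ⁅⁅⁅y s, x 2⁆, x 2⁆, x 0⁆ = -(2 • A) := by
      have h := congrArg (fun z => ⁅z, x 0⁆) (ht3''' s)
      simp only [nsl, neg_lie, lie_nsmul] at h
      rw [h, hb s 1]
    -- T s 1 1 2 = 4 • A
    have e4 : ⁅⁅⁅y s, x 1⁆, x 1⁆, x 2⁆ = (4 : ℕ) • A := by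
      have h := congrArg (fun z => ⁅z, x 2⁆) (ht3' s)
      simp only [nsl, neg_lie] at h
      rw [h, swap ⁅y s, x 2⁆ 0 2, e3]
      rw [smul_neg, smul_smul]
      simp
    -- T s 1 1 2 = T s 2 1 1
    have e5 : ⁅⁅⁅y s, x 1⁆, x 1⁆, x 2⁆ = ⁅⁅⁅y s, x 2⁆, x 1⁆, x 1⁆ := by
      rw [swap ⁅y s, x 1⁆ 1 2, swap (y s) 1 2]
    -- conclude 9 • A = 0
    have e6 : (9 : ℕ) • A = 0 := by
      have h : 2 • ((4 : ℕ) • A) = -A := by rw [← e4, e5, e2]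
      rw [smul_smul] at h
      norm_num at h
      have : (9 : ℕ) • A = (8 : ℕ) • A + A := by rw [succ_nsmul]
      rw [this, h, neg_add_cancel]
    exact nine A e6
  -- key fact 2 : ⁅⁅⁅y s, x 5⁆, x 0⁆, x 0⁆ = 0 for all s
  have key2 : ∀ s : ℕ, ⁅⁅⁅y s, x 5⁆, x 0⁆, x 0⁆ = 0 := by
    intro s
    set B := ⁅⁅⁅y s, x 5⁆, x 0⁆, x 0⁆ with hB
    -- T s 3 2 0 = B
    have e1 : ⁅⁅⁅y s, x 3⁆, x 2⁆, x 0⁆ = B := by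
      rw [show (3 : ℕ) = 0 + 3 by norm_num, ← hb s 0,
        show ⁅⁅⁅y (s+1), x 0⁆, x 2⁆, x 0⁆ = ⁅⁅⁅y (s+1), x 2⁆, x 0⁆, x 0⁆ from
          congrArg (fun z => ⁅z, x 0⁆) (swap (y (s+1)) 0 2),
        hb s 2]
    -- 2 • T s 2 1 2 = -B
    have e2 : 2 • ⁅⁅⁅y s, x 2⁆, x 1⁆, x 2⁆ = -B := by
      have h := congrArg (fun z => ⁅z, x 2⁆) (ht3'' s)
      simp only [nsl, neg_lie] at h
      rw [h, hb s 0]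
      rw [swap ⁅y s, x (0+3)⁆ 0 2, e1]
    -- T s 4 1 0 = -(2 • B)
    have e3 : ⁅⁅⁅y s, x 4⁆, x 1⁆, x 0⁆ = -(2 • B) := by
      have h := congrArg (fun z => ⁅z, x 0⁆) (ht3' (s+1))
      simp only [nsl, neg_lie] at h
      rw [hb s 1, hb s 2] at h
      exact h
    -- T s 2 2 1 = 4 • B
    have e4 : ⁅⁅⁅y s, x 2⁆, x 2⁆, x 1⁆ = (4 : ℕ) • B := by
      have h := congrArg (fun z => ⁅z, x 1⁆) (ht3''' s)
      simp only [nsl, neg_lie] at h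
      rw [h, hb s 1, swap ⁅y s, x (1+3)⁆ 0 1, e3]
      rw [smul_neg, smul_smul]
      simp
    -- T s 2 1 2 = T s 2 2 1
    have e5 : ⁅⁅⁅y s, x 2⁆, x 1⁆, x 2⁆ = ⁅⁅⁅y s, x 2⁆, x 2⁆, x 1⁆ := by
      rw [swap ⁅y s, x 2⁆ 1 2]
    have e6 : (9 : ℕ) • B = 0 := by
      have h : 2 • ((4 : ℕ) • B) = -B := by rw [← e4, ← e5, e2]
      rw [smul_smul] at h
      norm_num at h
      have : (9 : ℕ) • B = (8 : ℕ) • B + B := by rw [succ_nsmul]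
      rw [this, h, neg_add_cancel]
    exact nine B e6
  intro s hs
  obtain ⟨t, rfl⟩ := Nat.exists_eq_add_of_le hs
  rw [add_comm 1 t]
  constructor
  · rw [hb t 1]; exact key1 t
  · rw [hb t 2]; exact key2 t
end

section
/- Let K be a field of characteristic zero, L a Lie algebra over K, and x, y : ℕ → L two families such that ⁅x(a), x(b)⁆ = 0 for all a, b ∈ ℕ and ⁅y(s+1), x(r)⁆ = ⁅y(s), x(r+3)⁆ for all s, r ∈ ℕ. Assume for all s ∈ ℕ: ⁅⁅y(s), x(1)⁆, x(1)⁆ = −2⁅⁅y(s), x(2)⁆, x(0)⁆, 2⁅⁅y(s), x(2)⁆, x(1)⁆ = −⁅⁅y(s+1), x(0)⁆, x(0)⁆, ⁅⁅y(s), x(2)⁆, x(2)⁆ = −2⁅⁅y(s+1), x(1)⁆, x(0)⁆, and additionally ⁅⁅⁅y(0), x(1)⁆, x(0)⁆, x(0)⁆ = 0 and ⁅⁅⁅y(0), x(2)⁆, x(0)⁆, x(0)⁆ = 0. Then for all s, r₁, r₂, r₃ ∈ ℕ, the sum over all six permutations σ of {1,2,3} of ⁅⁅⁅y(s), x(r_{σ(1)}+1)⁆,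 x(r_{σ(2)})⁆, x(r_{σ(3)})⁆ equals 0. -/
/-- Proposition 7.24 (case `k = 3`, `a_{ij} = −3`, rescaled): relations (x_{1,2}), (x_d),
(t₃'), (t₃''), (t₃'''), (u₃'), (u₃'') imply relation (u3): for all `s` and `r₁, r₂, r₃`,
the sum over all six permutations `σ` of `{1,2,3}` of
`⁅⁅⁅y s, x (r_{σ(1)}+1)⁆, x (r_{σ(2)})⁆, x (r_{σ(3)})⁆` vanishes. -/
theorem stmt_12 (K : Type*) [Field K] [CharZero K]
    (L : Type*) [LieRing L] [LieAlgebra K L]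
    (x y : ℕ → L)
    (ha : ∀ a b : ℕ, ⁅x a, x b⁆ = 0)
    (hb : ∀ s r : ℕ, ⁅y (s + 1), x r⁆ = ⁅y s, x (r + 3)⁆)
    (ht3' : ∀ s : ℕ, ⁅⁅y s, x 1⁆, x 1⁆ = -(2 • ⁅⁅y s, x 2⁆, x 0⁆))
    (ht3'' : ∀ s : ℕ, 2 • ⁅⁅y s, x 2⁆, x 1⁆ = -⁅⁅y (s + 1), x 0⁆, x 0⁆)
    (ht3''' : ∀ s : ℕ, ⁅⁅y s, x 2⁆, x 2⁆ = -(2 • ⁅⁅y (s + 1), x 1⁆, x 0⁆))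
    (hu3' : ⁅⁅⁅y 0, x 1⁆, x 0⁆, x 0⁆ = 0)
    (hu3'' : ⁅⁅⁅y 0, x 2⁆, x 0⁆, x 0⁆ = 0) :
    ∀ (s : ℕ) (r : Fin 3 → ℕ),
      ∑ σ : Equiv.Perm (Fin 3),
        ⁅⁅⁅y s, x (r (σ 0) + 1)⁆, x (r (σ 1))⁆, x (r (σ 2))⁆ = 0 := by
  -- the last two bracketing operations commute
  have swap2 : ∀ (z : L) (a b : ℕ), ⁅⁅z, x a⁆, x b⁆ = ⁅⁅z, x b⁆, x a⁆ := by
    intro z a b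
    rw [lie_lie, ha, lie_zero, zero_sub, ← lie_skew, neg_neg]
  have sw23 : ∀ (s a b c : ℕ),
      ⁅⁅⁅y s, x a⁆, x b⁆, x c⁆ = ⁅⁅⁅y s, x a⁆, x c⁆, x b⁆ :=
    fun s a b c => swap2 ⁅y s, x a⁆ b c
  have sw12 : ∀ (s a b c : ℕ),
      ⁅⁅⁅y s, x a⁆, x b⁆, x c⁆ = ⁅⁅⁅y s, x b⁆, x a⁆, x c⁆ := by
    intro s a b c; rw [swap2 (y s) a b]
  have shift : ∀ (s a b c : ℕ),
      ⁅⁅⁅y (s + 1), x a⁆, x b⁆, x c⁆ = ⁅⁅⁅y s, x (a + 3)⁆, x b⁆, x c⁆ := by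
    intro s a b c; rw [hb]
  have H1 : ∀ (s m : ℕ),
      ⁅⁅⁅y s, x 1⁆, x 1⁆, x m⁆ = -(2 • ⁅⁅⁅y s, x 2⁆, x 0⁆, x m⁆) := by
    intro s m; rw [ht3' s, neg_lie, two_smul, add_lie, ← two_smul ℕ]
  have H2 : ∀ (s m : ℕ),
      2 • ⁅⁅⁅y s, x 2⁆, x 1⁆, x m⁆ = -⁅⁅⁅y (s + 1), x 0⁆, x 0⁆, x m⁆ := by
    intro s m; rw [two_smul, ← add_lie, ← two_smul ℕ, ht3'' s, neg_lie]
  have H3 : ∀ (s m : ℕ),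
      ⁅⁅⁅y s, x 2⁆, x 2⁆, x m⁆ = -(2 • ⁅⁅⁅y (s + 1), x 1⁆, x 0⁆, x m⁆) := by
    intro s m; rw [ht3''' s, neg_lie, two_smul, add_lie, ← two_smul ℕ]
  have cancel9 : ∀ v : L, (9 : ℕ) • v = 0 → v = 0 := by
    intro v h
    rw [← Nat.cast_smul_eq_nsmul K] at h
    simpa using h
  -- Z1 : B s 0 0 1 = 0
  have Z1 : ∀ s : ℕ, ⁅⁅⁅y s, x 0⁆, x 0⁆, x 1⁆ = 0 := by
    intro s
    cases s with
    | zero =>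
      rw [sw23 0 0 0 1, sw12 0 0 1 0]; exact hu3'
    | succ s =>
      have e3 : ⁅⁅⁅y s, x 2⁆, x 2⁆, x 0⁆ = -(2 • ⁅⁅⁅y (s + 1), x 0⁆, x 0⁆, x 1⁆) := by
        rw [H3 s 0, sw12 (s + 1) 1 0 0, sw23 (s + 1) 0 1 0]
      have e2 : ⁅⁅⁅y s, x 1⁆, x 1⁆, x 2⁆ =
          (2 : ℕ) • (2 • ⁅⁅⁅y (s + 1), x 0⁆, x 0⁆, x 1⁆) := by
        rw [H1 s 2, sw23 s 2 0 2, e3, smul_neg, neg_neg]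
      have e1 := H2 s 1
      rw [sw12 s 2 1 1, sw23 s 1 2 1, e2, smul_smul, smul_smul] at e1
      apply cancel9
      rw [show (9 : ℕ) = 2 * 2 * 2 + 1 from rfl, add_smul, one_smul, e1,
        neg_add_cancel]
  -- Z2 : B s 0 0 2 = 0
  have Z2 : ∀ s : ℕ, ⁅⁅⁅y s, x 0⁆, x 0⁆, x 2⁆ = 0 := by
    intro s
    cases s with
    | zero =>
      rw [sw23 0 0 0 2, sw12 0 0 2 0]; exact hu3''
    | succ s =>
      have e0 : ⁅⁅⁅y (s + 1), x 0⁆, x 1⁆, x 1⁆ =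
          -(2 • ⁅⁅⁅y (s + 1), x 0⁆, x 0⁆, x 2⁆) := by
        rw [sw12 (s + 1) 0 1 1, sw23 (s + 1) 1 0 1, H1 (s + 1) 0,
          sw12 (s + 1) 2 0 0, sw23 (s + 1) 0 2 0]
      have e1 : ⁅⁅⁅y s, x 2⁆, x 2⁆, x 1⁆ =
          (2 : ℕ) • (2 • ⁅⁅⁅y (s + 1), x 0⁆, x 0⁆, x 2⁆) := by
        rw [H3 s 1, sw12 (s + 1) 1 0 1, e0, smul_neg, neg_neg]
      have e2 := H2 s 2
      rw [sw23 s 2 1 2, e1, smul_smul, smul_smul] at e2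
      apply cancel9
      rw [show (9 : ℕ) = 2 * 2 * 2 + 1 from rfl, add_smul, one_smul, e2,
        neg_add_cancel]
  -- Z6 : B s 0 1 1 = 0
  have Z6 : ∀ s : ℕ, ⁅⁅⁅y s, x 0⁆, x 1⁆, x 1⁆ = 0 := by
    intro s
    rw [sw12 s 0 1 1, sw23 s 1 0 1, H1 s 0, sw12 s 2 0 0, sw23 s 0 2 0, Z2 s]
    simp
  -- Z3 : B s 0 2 2 = 0
  have Z3 : ∀ s : ℕ, ⁅⁅⁅y s, x 0⁆, x 2⁆, x 2⁆ = 0 := by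
    intro s
    rw [sw12 s 0 2 2, sw23 s 2 0 2, H3 s 0, sw12 (s + 1) 1 0 0, sw23 (s + 1) 0 1 0,
      Z1 (s + 1)]
    simp
  -- Z4 : B s 1 1 2 = 0
  have Z4 : ∀ s : ℕ, ⁅⁅⁅y s, x 1⁆, x 1⁆, x 2⁆ = 0 := by
    intro s
    rw [H1 s 2, sw12 s 2 0 2, Z3 s]
    simp
  -- Z5 : B s 1 2 2 = 0
  have Z5 : ∀ s : ℕ, ⁅⁅⁅y s, x 1⁆, x 2⁆, x 2⁆ = 0 := by
    intro s
    rw [sw12 s 1 2 2, sw23 s 2 1 2, H3 s 1, sw12 (s + 1) 1 0 1, Z6 (s + 1)]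
    simp
  -- the sorted base case
  have base : ∀ (s a b c : ℕ), a ≤ b → b ≤ c → c < 3 →
      ⁅⁅⁅y s, x (a + 1)⁆, x b⁆, x c⁆ + ⁅⁅⁅y s, x (b + 1)⁆, x a⁆, x c⁆ +
        ⁅⁅⁅y s, x (c + 1)⁆, x a⁆, x b⁆ = 0 := by
    intro s a b c h1 h2 h3
    interval_cases c <;> interval_cases b <;> interval_cases a <;>
        simp only [Nat.reduceAdd]
    · -- (0,0,0)
      have z : ⁅⁅⁅y s, x 1⁆, x 0⁆, x 0⁆ = 0 := by
        rw [sw12 s 1 0 0, sw23 s 0 1 0]; exact Z1 s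
      rw [z]; simp
    · -- (0,0,1)
      have z1 : ⁅⁅⁅y s, x 1⁆, x 0⁆, x 1⁆ = 0 := by
        rw [sw12 s 1 0 1]; exact Z6 s
      have z2 : ⁅⁅⁅y s, x 2⁆, x 0⁆, x 0⁆ = 0 := by
        rw [sw12 s 2 0 0, sw23 s 0 2 0]; exact Z2 s
      rw [z1, z2]; simp
    · -- (0,1,1)
      rw [H1 s 1]; abel
    · -- (1,1,1)
      have z : ⁅⁅⁅y s, x 2⁆, x 1⁆, x 1⁆ = 0 := by
        rw [sw12 s 2 1 1, sw23 s 1 2 1]; exact Z4 s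
      rw [z]; simp
    · -- (0,0,2)
      have p : ⁅⁅⁅y s, x 1⁆, x 0⁆, x 2⁆ = ⁅⁅⁅y s, x 2⁆, x 1⁆, x 0⁆ := by
        rw [sw23 s 1 0 2, sw12 s 1 2 0]
      have q : ⁅⁅⁅y s, x 3⁆, x 0⁆, x 0⁆ = ⁅⁅⁅y (s + 1), x 0⁆, x 0⁆, x 0⁆ := by
        rw [show (3 : ℕ) = 0 + 3 from rfl, ← shift s 0 0 0]
      rw [p, q, ← two_smul ℕ, H2 s 0, neg_add_cancel]
    · -- (0,1,2)
      have z2 : ⁅⁅⁅y s, x 2⁆, x 0⁆, x 2⁆ = 0 := by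
        rw [sw12 s 2 0 2]; exact Z3 s
      have z3 : ⁅⁅⁅y s, x 3⁆, x 0⁆, x 1⁆ = 0 := by
        rw [show (3 : ℕ) = 0 + 3 from rfl, ← shift s 0 0 1]; exact Z1 (s + 1)
      rw [Z4 s, z2, z3]; simp
    · -- (1,1,2)
      have z1 : ⁅⁅⁅y s, x 2⁆, x 1⁆, x 2⁆ = 0 := by
        rw [sw12 s 2 1 2]; exact Z5 s
      have z2 : ⁅⁅⁅y s, x 3⁆, x 1⁆, x 1⁆ = 0 := by
        rw [show (3 : ℕ) = 0 + 3 from rfl, ← shift s 0 1 1]; exact Z6 (s + 1)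
      rw [z1, z2]; simp
    · -- (0,2,2)
      have z2 : ⁅⁅⁅y s, x 3⁆, x 0⁆, x 2⁆ = 0 := by
        rw [show (3 : ℕ) = 0 + 3 from rfl, ← shift s 0 0 2]; exact Z2 (s + 1)
      rw [Z5 s, z2]; simp
    · -- (1,2,2)
      have p : ⁅⁅⁅y s, x 3⁆, x 1⁆, x 2⁆ = ⁅⁅⁅y (s + 1), x 1⁆, x 0⁆, x 2⁆ := by
        rw [show (3 : ℕ) = 0 + 3 from rfl, ← shift s 0 1 2]
        exact sw12 (s + 1) 0 1 2
      rw [H3 s 2, p]; abel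
    · -- (2,2,2)
      have z : ⁅⁅⁅y s, x 3⁆, x 2⁆, x 2⁆ = 0 := by
        rw [show (3 : ℕ) = 0 + 3 from rfl, ← shift s 0 2 2]; exact Z3 (s + 1)
      rw [z]; simp
  -- symmetry of the cyclic sum
  have vsym12 : ∀ (s a b c : ℕ),
      ⁅⁅⁅y s, x (a + 1)⁆, x b⁆, x c⁆ + ⁅⁅⁅y s, x (b + 1)⁆, x a⁆, x c⁆ +
        ⁅⁅⁅y s, x (c + 1)⁆, x a⁆, x b⁆ =
      ⁅⁅⁅y s, x (b + 1)⁆, x a⁆, x c⁆ + ⁅⁅⁅y s, x (a + 1)⁆, x b⁆, x c⁆ +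
        ⁅⁅⁅y s, x (c + 1)⁆, x b⁆, x a⁆ := by
    intro s a b c
    rw [sw23 s (c + 1) a b]; abel
  have vsym23 : ∀ (s a b c : ℕ),
      ⁅⁅⁅y s, x (a + 1)⁆, x b⁆, x c⁆ + ⁅⁅⁅y s, x (b + 1)⁆, x a⁆, x c⁆ +
        ⁅⁅⁅y s, x (c + 1)⁆, x a⁆, x b⁆ =
      ⁅⁅⁅y s, x (a + 1)⁆, x c⁆, x b⁆ + ⁅⁅⁅y s, x (c + 1)⁆, x a⁆, x b⁆ +
        ⁅⁅⁅y s, x (b + 1)⁆, x a⁆, x c⁆ := by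
    intro s a b c
    rw [sw23 s (a + 1) b c]; abel
  -- the key relation for all indices
  have key : ∀ (n s a b c : ℕ), a + b + c = n →
      ⁅⁅⁅y s, x (a + 1)⁆, x b⁆, x c⁆ + ⁅⁅⁅y s, x (b + 1)⁆, x a⁆, x c⁆ +
        ⁅⁅⁅y s, x (c + 1)⁆, x a⁆, x b⁆ = 0 := by
    intro n
    induction n using Nat.strong_induction_on with
    | _ n ih =>
    intro s a b c hn
    by_cases hA : 3 ≤ a
    · obtain ⟨a', rfl⟩ : ∃ a', a = a' + 3 := ⟨a - 3, by omega⟩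
      rw [show a' + 3 + 1 = a' + 1 + 3 from by omega, ← shift s (a' + 1) b c,
        sw12 s (b + 1) (a' + 3) c, ← shift s a' (b + 1) c, sw12 (s + 1) a' (b + 1) c,
        sw12 s (c + 1) (a' + 3) b, ← shift s a' (c + 1) b, sw12 (s + 1) a' (c + 1) b]
      exact ih (a' + b + c) (by omega) (s + 1) a' b c rfl
    by_cases hB : 3 ≤ b
    · obtain ⟨b', rfl⟩ : ∃ b', b = b' + 3 := ⟨b - 3, by omega⟩
      rw [sw12 s (a + 1) (b' + 3) c, ← shift s b' (a + 1) c, sw12 (s + 1) b' (a + 1) c,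
        show b' + 3 + 1 = b' + 1 + 3 from by omega, ← shift s (b' + 1) a c,
        sw23 s (c + 1) a (b' + 3), sw12 s (c + 1) (b' + 3) a, ← shift s b' (c + 1) a,
        sw12 (s + 1) b' (c + 1) a, sw23 (s + 1) (c + 1) b' a]
      exact ih (a + b' + c) (by omega) (s + 1) a b' c rfl
    by_cases hC : 3 ≤ c
    · obtain ⟨c', rfl⟩ : ∃ c', c = c' + 3 := ⟨c - 3, by omega⟩
      rw [sw23 s (a + 1) b (c' + 3), sw12 s (a + 1) (c' + 3) b, ← shift s c' (a + 1) b,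
        sw12 (s + 1) c' (a + 1) b, sw23 (s + 1) (a + 1) c' b,
        sw23 s (b + 1) a (c' + 3), sw12 s (b + 1) (c' + 3) a, ← shift s c' (b + 1) a,
        sw12 (s + 1) c' (b + 1) a, sw23 (s + 1) (b + 1) c' a,
        show c' + 3 + 1 = c' + 1 + 3 from by omega, ← shift s (c' + 1) a b]
      exact ih (a + b + c') (by omega) (s + 1) a b c' rfl
    push_neg at hA hB hC
    rcases le_total a b with h1 | h1 <;> rcases le_total b c with h2 | h2 <;>
      rcases le_total a c with h3 | h3
    · exact base s a b c h1 h2 hC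
    · exact base s a b c h1 h2 hC
    · rw [vsym23]; exact base s a c b h3 h2 hB
    · rw [vsym23, vsym12]; exact base s c a b h3 h1 hB
    · rw [vsym12]; exact base s b a c h1 h3 hC
    · rw [vsym12, vsym23]; exact base s b c a h2 h3 hA
    · rw [vsym23, vsym12, vsym23]; exact base s c b a h2 h1 hA
    · rw [vsym23, vsym12, vsym23]; exact base s c b a h2 h1 hA
  -- finally, the permutation sum
  intro s r
  have huniv : (Finset.univ : Finset (Equiv.Perm (Fin 3))) =
      {1, Equiv.swap 0 1, Equiv.swap 0 2, Equiv.swap 1 2,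
       Equiv.swap 0 1 * Equiv.swap 1 2, Equiv.swap 1 2 * Equiv.swap 0 1} := by decide
  rw [huniv, Finset.sum_insert (by decide), Finset.sum_insert (by decide),
    Finset.sum_insert (by decide), Finset.sum_insert (by decide),
    Finset.sum_pair (by decide)]
  simp only [show ((1 : Equiv.Perm (Fin 3)) 0) = 0 from rfl,
    show ((1 : Equiv.Perm (Fin 3)) 1) = 1 from rfl,
    show ((1 : Equiv.Perm (Fin 3)) 2) = 2 from rfl,
    show (Equiv.swap (0 : Fin 3) 1) 0 = 1 from by decide,
    show (Equiv.swap (0 : Fin 3) 1) 1 = 0 from by decide,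
    show (Equiv.swap (0 : Fin 3) 1) 2 = 2 from by decide,
    show (Equiv.swap (0 : Fin 3) 2) 0 = 2 from by decide,
    show (Equiv.swap (0 : Fin 3) 2) 1 = 1 from by decide,
    show (Equiv.swap (0 : Fin 3) 2) 2 = 0 from by decide,
    show (Equiv.swap (1 : Fin 3) 2) 0 = 0 from by decide,
    show (Equiv.swap (1 : Fin 3) 2) 1 = 2 from by decide,
    show (Equiv.swap (1 : Fin 3) 2) 2 = 1 from by decide,
    show ((Equiv.swap 0 1 * Equiv.swap 1 2 : Equiv.Perm (Fin 3)) 0) = 1 from by decide,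
    show ((Equiv.swap 0 1 * Equiv.swap 1 2 : Equiv.Perm (Fin 3)) 1) = 2 from by decide,
    show ((Equiv.swap 0 1 * Equiv.swap 1 2 : Equiv.Perm (Fin 3)) 2) = 0 from by decide,
    show ((Equiv.swap 1 2 * Equiv.swap 0 1 : Equiv.Perm (Fin 3)) 0) = 2 from by decide,
    show ((Equiv.swap 1 2 * Equiv.swap 0 1 : Equiv.Perm (Fin 3)) 1) = 0 from by decide,
    show ((Equiv.swap 1 2 * Equiv.swap 0 1 : Equiv.Perm (Fin 3)) 2) = 1 from by decide]
  have k := key (r 0 + r 1 + r 2) s (r 0) (r 1) (r 2) rfl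
  rw [sw23 s (r 2 + 1) (r 1) (r 0), sw23 s (r 0 + 1) (r 2) (r 1),
    sw23 s (r 1 + 1) (r 2) (r 0)]
  trans (⁅⁅⁅y s, x (r 0 + 1)⁆, x (r 1)⁆, x (r 2)⁆ +
      ⁅⁅⁅y s, x (r 1 + 1)⁆, x (r 0)⁆, x (r 2)⁆ +
      ⁅⁅⁅y s, x (r 2 + 1)⁆, x (r 0)⁆, x (r 1)⁆) +
    (⁅⁅⁅y s, x (r 0 + 1)⁆, x (r 1)⁆, x (r 2)⁆ +
      ⁅⁅⁅y s, x (r 1 + 1)⁆, x (r 0)⁆, x (r 2)⁆ +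
      ⁅⁅⁅y s, x (r 2 + 1)⁆, x (r 0)⁆, x (r 1)⁆)
  · abel
  · rw [k, add_zero]
end

section
/- Let K be a field of characteristic zero, L a Lie algebra over K, m ≥ 1 a natural number, and x, y : ℕ → L two families such that: (a) ⁅x(a), x(b)⁆ = 0 for all a, b ∈ ℕ; (b) ⁅y(s+1), x(r)⁆ = ⁅y(s), x(r+1)⁆ for all s, r ∈ ℕ; and (c) (ad x(0))^m (y(s)) = 0 for all s ∈ ℕ. Then for all s ∈ ℕ and all r₁, …, r_m ∈ ℕ, the iterated bracket ⁅…⁅⁅y(s), x(r₁)⁆, x(r₂)⁆, …, x(r_m)⁆ equals 0. -/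
/-- Proposition 7.27 (generic untwisted case): if all brackets `⁅x a, x b⁆` vanish,
`⁅y (s+1), x r⁆ = ⁅y s, x (r+1)⁆`, and the Serre relation `(ad x 0)^m (y s) = 0` holds,
then every iterated bracket `⁅…⁅⁅y s, x r₁⁆, x r₂⁆, …, x r_m⁆` of length `m` vanishes. -/
theorem stmt_13 (K : Type*) [Field K] [CharZero K]
    (L : Type*) [LieRing L] [LieAlgebra K L]
    (m : ℕ) (hm : 1 ≤ m) (x y : ℕ → L)
    (ha : ∀ a b : ℕ, ⁅x a, x b⁆ = 0)
    (hb : ∀ s r : ℕ, ⁅y (s + 1), x r⁆ = ⁅y s, x (r + 1)⁆)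
    (hserre : ∀ s : ℕ, ((LieAlgebra.ad K L (x 0)) ^ m) (y s) = 0) :
    ∀ (s : ℕ) (r : List ℕ), r.length = m →
      r.foldl (fun z i => ⁅z, x i⁆) (y s) = 0 := by
  set A : Module.End K L := LieAlgebra.ad K L (x 0) with hA
  set f : L → ℕ → L := fun z i => ⁅z, x i⁆ with hf
  have hAz : ∀ z : L, A z = ⁅x 0, z⁆ := fun z => rfl
  -- key Leibniz consequence
  have hkey : ∀ (a b : ℕ) (z : L), ⁅⁅x a, z⁆, x b⁆ = ⁅x a, ⁅z, x b⁆⁆ := by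
    intro a b z
    have h := leibniz_lie (x a) z (x b)
    rw [ha a b, lie_zero, add_zero] at h
    -- h : ⁅x a, ⁅z, x b⁆⁆ = ⁅⁅x a, z⁆, x b⁆
    exact h.symm
  -- swapping two successive brackets
  have hswap : ∀ (a b : ℕ) (z : L), ⁅⁅z, x a⁆, x b⁆ = ⁅⁅z, x b⁆, x a⁆ := by
    intro a b z
    calc ⁅⁅z, x a⁆, x b⁆ = -⁅⁅x a, z⁆, x b⁆ := by rw [← neg_lie, lie_skew]
      _ = -⁅x a, ⁅z, x b⁆⁆ := by rw [hkey]
      _ = ⁅⁅z, x b⁆, x a⁆ := by rw [← lie_skew, neg_neg]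
  -- bracket with `x r` commutes past a foldl
  have hcomm : ∀ (l : List ℕ) (z : L) (r : ℕ),
      l.foldl f ⁅z, x r⁆ = ⁅l.foldl f z, x r⁆ := by
    intro l
    induction l with
    | nil => intro z r; simp
    | cons a t ih =>
      intro z r
      show t.foldl f ⁅⁅z, x r⁆, x a⁆ = ⁅t.foldl f ⁅z, x a⁆, x r⁆
      rw [hswap, ih]
  -- A^k commutes with bracketing by x r
  have hAcomm : ∀ (k r : ℕ) (z : L), ⁅(A ^ k) z, x r⁆ = (A ^ k) ⁅z, x r⁆ := by
    intro k
    induction k with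
    | zero => intro r z; simp
    | succ k ih =>
      intro r z
      rw [pow_succ, Module.End.mul_apply, Module.End.mul_apply, ih, hAz, hkey, ← hAz]
  -- shifting indices
  have hshift : ∀ (r u : ℕ), ⁅y u, x r⁆ = ⁅y (u + r), x 0⁆ := by
    intro r
    induction r with
    | zero => intro u; rfl
    | succ r ih =>
      intro u
      rw [← hb, ih (u + 1)]
      ring_nf
  -- main normalization
  have main : ∀ (l : List ℕ) (s : ℕ),
      l.foldl f (y s) = ((-1 : ℤ) ^ l.length) • (A ^ l.length) (y (s + l.sum)) := by
    intro l
    induction l with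
    | nil => intro s; simp
    | cons r t ih =>
      intro s
      show t.foldl f ⁅y s, x r⁆ = _
      rw [hcomm, ih, smul_lie, hAcomm, hshift]
      have h0 : ⁅y (s + t.sum + r), x 0⁆ = -(A (y (s + t.sum + r))) := by
        rw [hAz, ← lie_skew]
      rw [h0]
      have : (A ^ t.length) (-(A (y (s + t.sum + r)))) =
          -((A ^ (t.length + 1)) (y (s + t.sum + r))) := by
        rw [map_neg, pow_succ, Module.End.mul_apply]
      rw [this]
      simp only [List.length_cons, List.sum_cons, smul_neg]
      have harg : s + (r + t.sum) = s + t.sum + r := by ring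
      rw [harg, show ((-1 : ℤ) ^ (t.length + 1)) = -((-1 : ℤ) ^ t.length) by ring, neg_smul]
  intro s r hlen
  rw [main, hlen, hserre, smul_zero]
end

section
/- Let K be a field of characteristic zero, L a Lie algebra over K, and x, y : ℕ → L two families such that ⁅x(a), x(b)⁆ = 0 for all a, b ∈ ℕ and ⁅y(s+1), x(r)⁆ = ⁅y(s), x(r+2)⁆ for all s, r ∈ ℕ. Assume that for all s ∈ ℕ: ⁅⁅y(s), x(1)⁆, x(0)⁆ = 0 and ⁅⁅y(s), x(1)⁆, x(1)⁆ + ⁅⁅y(s+1), x(0)⁆, x(0)⁆ = 0. Then for every s ≥ 1 one has ⁅⁅⁅y(s), x(0)⁆, x(0)⁆, x(0)⁆ = 0. -/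
/-- Remark 7.28, case `k = 2`, `a_{ij} = −2`, `X_{ñ}^{(k)} ≠ A_{2n}^{(2)}` (rescaled):
relations (x_{1,2}), (x_d), (t₂'), (t₂'') imply the Serre relation
`⁅⁅⁅y s, x 0⁆, x 0⁆, x 0⁆ = 0` for all `s ≥ 1`. -/
theorem stmt_14 (K : Type*) [Field K] [CharZero K]
    (L : Type*) [LieRing L] [LieAlgebra K L]
    (x y : ℕ → L)
    (ha : ∀ a b : ℕ, ⁅x a, x b⁆ = 0)
    (hb : ∀ s r : ℕ, ⁅y (s + 1), x r⁆ = ⁅y s, x (r + 2)⁆)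
    (ht2' : ∀ s : ℕ, ⁅⁅y s, x 1⁆, x 0⁆ = 0)
    (ht2'' : ∀ s : ℕ, ⁅⁅y s, x 1⁆, x 1⁆ + ⁅⁅y (s + 1), x 0⁆, x 0⁆ = 0) :
    ∀ s : ℕ, 1 ≤ s → ⁅⁅⁅y s, x 0⁆, x 0⁆, x 0⁆ = 0 := by
  intro s hs
  obtain ⟨t, rfl⟩ : ∃ t, s = t + 1 := ⟨s - 1, (Nat.succ_pred_eq_of_pos hs).symm⟩
  have h := congrArg (fun z => ⁅z, x 0⁆) (ht2'' t)
  simp only [add_lie, zero_lie] at h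
  have h1 : ⁅⁅⁅y t, x 1⁆, x 1⁆, x 0⁆ = 0 := by
    rw [lie_lie, ht2' t, lie_zero, sub_zero, ha, lie_zero]
  rw [h1, zero_add] at h
  exact h
end

section
/- Let n ∈ ℕ and let A : Fin n → Fin n → ℤ satisfy A i i = 2 for all i and A i j ≤ 0 for all i ≠ j. Let g̃ be the Lie algebra over ℂ presented by generators e i, f i, h i (i ∈ Fin n) with relations ⁅h i, h j⁆ = 0, ⁅h i, e j⁆ = (A i j) • e j, ⁅h i, f j⁆ = −(A i j) • f j, and ⁅e i, f j⁆ = δ_{ij} h i (i.e., the quotient of the free Lie algebra on these 3n generators by the Lie ideal generated by the corresponding elements). Let M be a g̃-module such that: (1) M is spanned by weight vectors, i.e., by vectors m for which there exists α : Fin n → ℂ with (h i) • m = (α i) • m for all i; and (2) for every i, the endomorphisms of M given by the actions of e i and of f i are locally nilpotent (for every m ∈ M there is N with (e i)^N • m = 0, and likewise for f i). Then for all i ≠ j, the elements (ad (e i))^{1 − A i j}(e j) and (ad (f i))^{1 − A i j}(f j) of g̃ act as zero on M. -/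
open LieAlgebra LieModule

attribute [local instance 100] LieRing.ofAssociativeRing

section AbstractSl2

variable {M : Type*} [AddCommGroup M] [Module ℂ M]

/-- Iterated bracket `⁅F, ⁅F, …, X⁆⁆` inside `End M`. -/
noncomputable def adIter (F X : Module.End ℂ M) : ℕ → Module.End ℂ M
  | 0 => X
  | (k + 1) => ⁅F, adIter F X k⁆

lemma adIter_zero (F X : Module.End ℂ M) : adIter F X 0 = X := rfl

lemma adIter_succ (F X : Module.End ℂ M) (k : ℕ) :
    adIter F X (k + 1) = ⁅F, adIter F X k⁆ := rfl

lemma adIter_apply_succ (F X : Module.End ℂ M) (k : ℕ) (u : M) :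
    (adIter F X (k + 1)) u = F ((adIter F X k) u) - (adIter F X k) (F u) := by
  rw [adIter_succ, Ring.lie_def]
  simp [LinearMap.sub_apply, Module.End.mul_apply]

lemma serre_aux (E F H X : Module.End ℂ M) (l : ℕ)
    (hEF : ⁅E, F⁆ = H) (hHF : ⁅H, F⁆ = (-2 : ℂ) • F)
    (hEX : ⁅E, X⁆ = 0) (hHX : ⁅H, X⁆ = (l : ℂ) • X)
    (hE : ∀ m : M, ∃ b : ℕ, (E ^ b) m = 0) (hF : ∀ m : M, ∃ b : ℕ, (F ^ b) m = 0)
    (m : M) : (adIter F X (l + 1)) m = 0 := by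
  -- weight identity
  have hH : ∀ k : ℕ, ⁅H, adIter F X k⁆ = ((l : ℂ) - 2 * k) • adIter F X k := by
    intro k
    induction k with
    | zero => simpa [adIter_zero] using hHX
    | succ k ih =>
      rw [adIter_succ, leibniz_lie, hHF, ih, smul_lie, lie_smul, ← adIter_succ, ← add_smul]
      congr 1
      push_cast
      ring
  -- bracket with `E`
  have hEk : ∀ k : ℕ, ⁅E, adIter F X (k + 1)⁆ =
      (((k : ℂ) + 1) * ((l : ℂ) - k)) • adIter F X k := by
    intro k
    induction k with
    | zero =>
      rw [adIter_succ, adIter_zero, leibniz_lie, hEF, hEX, hHX]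
      simp
    | succ k ih =>
      rw [adIter_succ F X (k + 1), leibniz_lie, hEF, ih, hH (k + 1), lie_smul, ← adIter_succ,
        ← add_smul]
      congr 1
      push_cast
      ring
  -- span claim
  have claimC : ∀ (k d : ℕ) (u : M), (F ^ d) u = 0 →
      (adIter F X k) u ∈ Submodule.span ℂ
        {w : M | ∃ q r : ℕ, k + 1 ≤ d + q ∧ w = (F ^ q) (X ((F ^ r) u))} := by
    intro k
    induction k with
    | zero =>
      intro d u hu
      match d with
      | 0 =>
        have hu0 : u = 0 := by simpa using hu
        simp [adIter, hu0]
      | (d + 1) =>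
        exact Submodule.subset_span ⟨0, 0, by omega, by simp [adIter]⟩
    | succ k ih =>
      intro d u hu
      match d with
      | 0 =>
        have hu0 : u = 0 := by simpa using hu
        simp [hu0]
      | (d + 1) =>
        rw [adIter_apply_succ]
        apply sub_mem
        · have h1 := ih (d + 1) u hu
          have h2 : F ((adIter F X k) u) ∈ Submodule.map F (Submodule.span ℂ
              {w : M | ∃ q r : ℕ, k + 1 ≤ d + 1 + q ∧ w = (F ^ q) (X ((F ^ r) u))}) :=
            Submodule.mem_map_of_mem h1
          rw [Submodule.map_span] at h2
          refine Submodule.span_mono ?_ h2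
          rintro w ⟨w', ⟨q, r, hq, rfl⟩, rfl⟩
          exact ⟨q + 1, r, by omega, by rw [pow_succ']; simp [Module.End.mul_apply]⟩
        · have hu' : (F ^ d) (F u) = 0 := by
            rw [← Module.End.mul_apply, ← pow_succ]; exact hu
          refine Submodule.span_mono ?_ (ih d (F u) hu')
          rintro w ⟨q, r, hq, rfl⟩
          exact ⟨q, r + 1, by omega, by rw [pow_succ]; simp [Module.End.mul_apply]⟩
  -- eventual vanishing, pointwise
  have vanish : ∀ u : M, ∃ P : ℕ, ∀ k, P ≤ k → (adIter F X k) u = 0 := by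
    intro u
    obtain ⟨d, hd⟩ := hF u
    choose g hg using fun r : ℕ => hF (X ((F ^ r) u))
    set K := (Finset.range d).sup g with hK
    refine ⟨d + K, fun k hk => ?_⟩
    have hmem := claimC k d u hd
    have hle : Submodule.span ℂ
        {w : M | ∃ q r : ℕ, k + 1 ≤ d + q ∧ w = (F ^ q) (X ((F ^ r) u))} ≤ ⊥ := by
      rw [Submodule.span_le]
      rintro w ⟨q, r, hq, rfl⟩
      simp only [SetLike.mem_coe, Submodule.mem_bot]
      by_cases hr : r < d
      · have hgr : g r ≤ q := le_trans (Finset.le_sup (Finset.mem_range.mpr hr)) (by omega)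
        have hpow : F ^ q = F ^ (q - g r) * F ^ (g r) := by
          rw [← pow_add]
          congr 1
          omega
        rw [hpow, Module.End.mul_apply, hg r, map_zero]
      · have hFr : (F ^ r) u = 0 := by
          have hrd : r = (r - d) + d := by omega
          rw [hrd, pow_add, Module.End.mul_apply, hd, map_zero]
        rw [hFr]
        simp
    simpa using hle hmem
  -- descending induction
  obtain ⟨B, hB⟩ := hE m
  choose P hP using fun b : ℕ => vanish ((E ^ b) m)
  set Q := (Finset.range B).sup P + B + l + 1 with hQ
  have base : ∀ b : ℕ, (adIter F X (l + 1 + Q)) ((E ^ b) m) = 0 := by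
    intro b
    by_cases hb : b < B
    · refine hP b _ ?_
      have := Finset.le_sup (f := P) (Finset.mem_range.mpr hb)
      omega
    · have hEb : (E ^ b) m = 0 := by
        have hbB : b = (b - B) + B := by omega
        rw [hbB, pow_add, Module.End.mul_apply, hB, map_zero]
      rw [hEb, map_zero]
  have desc : ∀ t b : ℕ, (adIter F X (l + 1 + (Q - t))) ((E ^ b) m) = 0 := by
    intro t
    induction t with
    | zero => simpa using base
    | succ t ih =>
      intro b
      by_cases hQt : Q ≤ t
      · have h : Q - (t + 1) = Q - t := by omega
        rw [h]; exact ih b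
      · set k₀ := l + 1 + (Q - (t + 1)) with hk₀
        have hk1 : k₀ + 1 = l + 1 + (Q - t) := by omega
        have heq := hEk k₀
        have happ := LinearMap.congr_fun heq ((E ^ b) m)
        rw [Ring.lie_def] at happ
        simp only [LinearMap.sub_apply, Module.End.mul_apply, LinearMap.smul_apply] at happ
        have hz1 : (adIter F X (k₀ + 1)) ((E ^ b) m) = 0 := by rw [hk1]; exact ih b
        have hz2 : (adIter F X (k₀ + 1)) (E ((E ^ b) m)) = 0 := by
          have : E ((E ^ b) m) = (E ^ (b + 1)) m := by
            rw [pow_succ']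
            simp [Module.End.mul_apply]
          rw [this, hk1]
          exact ih (b + 1)
        rw [hz1, hz2, map_zero, sub_zero] at happ
        have hc : (((k₀ : ℂ) + 1) * ((l : ℂ) - k₀)) ≠ 0 := by
          have h1 : ((k₀ : ℂ) + 1) ≠ 0 := by
            have : ((k₀ : ℂ) + 1) = ((k₀ + 1 : ℕ) : ℂ) := by push_cast; ring
            rw [this]
            exact_mod_cast Nat.succ_ne_zero k₀
          have h2 : (l : ℂ) ≠ (k₀ : ℂ) := by
            intro h
            have : l = k₀ := Nat.cast_injective h
            omega
          exact mul_ne_zero h1 (sub_ne_zero.mpr h2)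
        have := (smul_eq_zero.mp happ.symm).resolve_left hc
        exact this
  have := desc Q 0
  simpa using this

end AbstractSl2



/-- Generators `e i`, `f i`, `h i` of the Lie algebra `g̃₀` of Definition 8.12. -/
inductive ChevGen (n : ℕ) : Type
  | e : Fin n → ChevGen n
  | f : Fin n → ChevGen n
  | h : Fin n → ChevGen n

/-- The generator `e i` inside the free Lie algebra. -/
noncomputable def genE {n : ℕ} (i : Fin n) : FreeLieAlgebra ℂ (ChevGen n) :=
  FreeLieAlgebra.of ℂ (ChevGen.e i)

/-- The generator `f i` inside the free Lie algebra. -/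
noncomputable def genF {n : ℕ} (i : Fin n) : FreeLieAlgebra ℂ (ChevGen n) :=
  FreeLieAlgebra.of ℂ (ChevGen.f i)

/-- The generator `h i` inside the free Lie algebra. -/
noncomputable def genH {n : ℕ} (i : Fin n) : FreeLieAlgebra ℂ (ChevGen n) :=
  FreeLieAlgebra.of ℂ (ChevGen.h i)

/-- The defining relations of `g̃₀`: `⁅h i, h j⁆ = 0`, `⁅h i, e j⁆ = A i j • e j`,
`⁅h i, f j⁆ = − A i j • f j`, `⁅e i, f j⁆ = δ_{ij} h i`. -/
def chevRels (n : ℕ) (A : Fin n → Fin n → ℤ) : Set (FreeLieAlgebra ℂ (ChevGen n)) :=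
  (Set.range fun p : Fin n × Fin n => ⁅genH p.1, genH p.2⁆) ∪
  (Set.range fun p : Fin n × Fin n => ⁅genH p.1, genE p.2⁆ - A p.1 p.2 • genE p.2) ∪
  (Set.range fun p : Fin n × Fin n => ⁅genH p.1, genF p.2⁆ + A p.1 p.2 • genF p.2) ∪
  (Set.range fun p : Fin n × Fin n =>
    ⁅genE p.1, genF p.2⁆ - if p.1 = p.2 then genH p.1 else 0)

/-- The Lie ideal generated by the relations. -/
noncomputable abbrev chevIdeal (n : ℕ) (A : Fin n → Fin n → ℤ) :
    LieIdeal ℂ (FreeLieAlgebra ℂ (ChevGen n)) :=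
  LieSubmodule.lieSpan ℂ (FreeLieAlgebra ℂ (ChevGen n)) (chevRels n A)

/-- The presented Lie algebra `g̃₀` (Definition 8.12): the quotient of the free Lie algebra
on the generators `e i`, `f i`, `h i` by the Lie ideal generated by the relations. -/
noncomputable abbrev gTilde (n : ℕ) (A : Fin n → Fin n → ℤ) : Type :=
  FreeLieAlgebra ℂ (ChevGen n) ⧸ chevIdeal n A

/-- The image of `e i` in `g̃₀`. -/
noncomputable def eQ {n : ℕ} (A : Fin n → Fin n → ℤ) (i : Fin n) : gTilde n A :=
  LieSubmodule.Quotient.mk' (chevIdeal n A) (genE i)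

/-- The image of `f i` in `g̃₀`. -/
noncomputable def fQ {n : ℕ} (A : Fin n → Fin n → ℤ) (i : Fin n) : gTilde n A :=
  LieSubmodule.Quotient.mk' (chevIdeal n A) (genF i)

/-- The image of `h i` in `g̃₀`. -/
noncomputable def hQ {n : ℕ} (A : Fin n → Fin n → ℤ) (i : Fin n) : gTilde n A :=
  LieSubmodule.Quotient.mk' (chevIdeal n A) (genH i)



lemma lieModuleHom_map_zsmul {R L M N : Type*} [CommRing R] [LieRing L]
    [AddCommGroup M] [Module R M] [LieRingModule L M]
    [AddCommGroup N] [Module R N] [LieRingModule L N]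
    (f : M →ₗ⁅R,L⁆ N) (z : ℤ) (x : M) : f (z • x) = z • f x :=
  map_zsmul (f : M →ₗ[R] N) z x

lemma lieHom_map_zsmul {R L₁ L₂ : Type*} [CommRing R] [LieRing L₁] [LieAlgebra R L₁]
    [LieRing L₂] [LieAlgebra R L₂]
    (f : L₁ →ₗ⁅R⁆ L₂) (z : ℤ) (x : L₁) : f (z • x) = z • f x :=
  map_zsmul (f : L₁ →ₗ[R] L₂) z x

section Rels

variable {n : ℕ} (A : Fin n → Fin n → ℤ)

lemma lie_eQ_fQ (i j : Fin n) :
    ⁅eQ A i, fQ A j⁆ = if i = j then hQ A i else 0 := by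
  have hmem : (⁅genE i, genF j⁆ - if i = j then genH i else 0) ∈ chevIdeal n A :=
    LieSubmodule.subset_lieSpan (Set.mem_union_right _ ⟨(i, j), rfl⟩)
  have h0 := (LieSubmodule.Quotient.mk_eq_zero (chevIdeal n A)).mpr hmem
  rw [map_sub, sub_eq_zero] at h0
  calc ⁅eQ A i, fQ A j⁆
      = LieSubmodule.Quotient.mk' (chevIdeal n A) ⁅genE i, genF j⁆ := rfl
    _ = LieSubmodule.Quotient.mk' (chevIdeal n A) (if i = j then genH i else 0) := h0
    _ = if i = j then hQ A i else 0 := by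
        rw [apply_ite (LieSubmodule.Quotient.mk' (chevIdeal n A)), map_zero]
        rfl

lemma lie_hQ_eQ (i j : Fin n) : ⁅hQ A i, eQ A j⁆ = A i j • eQ A j := by
  have hmem : (⁅genH i, genE j⁆ - A i j • genE j) ∈ chevIdeal n A :=
    LieSubmodule.subset_lieSpan (Set.mem_union_left _ (Set.mem_union_left _
      (Set.mem_union_right _ ⟨(i, j), rfl⟩)))
  have h0 := (LieSubmodule.Quotient.mk_eq_zero (chevIdeal n A)).mpr hmem
  rw [map_sub, sub_eq_zero, lieModuleHom_map_zsmul] at h0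
  exact h0

lemma lie_hQ_fQ (i j : Fin n) : ⁅hQ A i, fQ A j⁆ = -(A i j • fQ A j) := by
  have hmem : (⁅genH i, genF j⁆ + A i j • genF j) ∈ chevIdeal n A :=
    LieSubmodule.subset_lieSpan (Set.mem_union_left _
      (Set.mem_union_right _ ⟨(i, j), rfl⟩))
  have h0 := (LieSubmodule.Quotient.mk_eq_zero (chevIdeal n A)).mpr hmem
  rw [map_add, lieModuleHom_map_zsmul, add_eq_zero_iff_eq_neg] at h0
  exact h0

end Rels

lemma toEnd_adIter {L : Type*} [LieRing L] [LieAlgebra ℂ L]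
    {M : Type*} [AddCommGroup M] [Module ℂ M] [LieRingModule L M] [LieModule ℂ L M]
    (x y : L) (k : ℕ) :
    LieModule.toEnd ℂ L M (((LieAlgebra.ad ℂ L x) ^ k) y)
      = adIter (LieModule.toEnd ℂ L M x) (LieModule.toEnd ℂ L M y) k := by
  induction k with
  | zero => simp [adIter_zero]
  | succ k ih =>
    rw [pow_succ', Module.End.mul_apply, LieAlgebra.ad_apply, LieHom.map_lie, ih, adIter_succ]

/-- Lemma 8.14: let `A` be a matrix with `A i i = 2` and `A i j ≤ 0` off the diagonal, and
`M` a `g̃₀`-module spanned by weight vectors on which the actions of all `e i` and `f i` are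
locally nilpotent. Then for `i ≠ j` the elements `(ad (e i))^{1 − A i j} (e j)` and
`(ad (f i))^{1 − A i j} (f j)` of `g̃₀` act as zero on `M`. -/
theorem stmt_16 (n : ℕ) (A : Fin n → Fin n → ℤ)
    (hdiag : ∀ i, A i i = 2) (hoff : ∀ i j, i ≠ j → A i j ≤ 0)
    (M : Type*) [AddCommGroup M] [Module ℂ M]
    [LieRingModule (gTilde n A) M] [LieModule ℂ (gTilde n A) M]
    (hwt : (⊤ : Submodule ℂ M) ≤ Submodule.span ℂ
      {m : M | ∃ α : Fin n → ℂ, ∀ i : Fin n, ⁅hQ A i, m⁆ = α i • m})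
    (hniE : ∀ (i : Fin n) (m : M), ∃ N : ℕ,
      ((LieModule.toEnd ℂ (gTilde n A) M (eQ A i)) ^ N) m = 0)
    (hniF : ∀ (i : Fin n) (m : M), ∃ N : ℕ,
      ((LieModule.toEnd ℂ (gTilde n A) M (fQ A i)) ^ N) m = 0) :
    ∀ i j : Fin n, i ≠ j →
      (∀ m : M, ⁅((LieAlgebra.ad ℂ (gTilde n A) (eQ A i)) ^ (1 - A i j).toNat) (eQ A j), m⁆
        = 0) ∧
      (∀ m : M, ⁅((LieAlgebra.ad ℂ (gTilde n A) (fQ A i)) ^ (1 - A i j).toNat) (fQ A j), m⁆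
        = 0) := by
  intro i j hij
  have hAneg : A i j ≤ 0 := hoff i j hij
  set l : ℕ := (-(A i j)).toNat with hl
  have hN : (1 - A i j).toNat = l + 1 := by omega
  have hlc : ((l : ℕ) : ℂ) = -((A i j : ℤ) : ℂ) := by
    have h1 : ((l : ℕ) : ℤ) = -(A i j) := Int.toNat_of_nonneg (by omega)
    exact_mod_cast congrArg (fun z : ℤ => (z : ℂ)) h1
  set ρ := LieModule.toEnd ℂ (gTilde n A) M with hρ
  have hcast : ∀ Y : Module.End ℂ M, -((A i j : ℤ) • Y) = (l : ℂ) • Y := by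
    intro Y
    rw [← Int.cast_smul_eq_zsmul ℂ, ← neg_smul, ← hlc]
  have hcast2 : ∀ Y : Module.End ℂ M, -((2 : ℤ) • Y) = (-2 : ℂ) • Y := by
    intro Y
    rw [← Int.cast_smul_eq_zsmul ℂ, ← neg_smul]
    norm_num
  have hef_ii : ⁅eQ A i, fQ A i⁆ = hQ A i := by simpa using lie_eQ_fQ A i i
  have hef_ij : ⁅eQ A i, fQ A j⁆ = 0 := by
    simpa [hij] using lie_eQ_fQ A i j
  have hef_ji : ⁅eQ A j, fQ A i⁆ = 0 := by
    simpa [Ne.symm hij] using lie_eQ_fQ A j i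
  constructor
  · -- e-side
    have hEF' : ⁅ρ (fQ A i), ρ (eQ A i)⁆ = -(ρ (hQ A i)) := by
      rw [← LieHom.map_lie, ← lie_skew (fQ A i) (eQ A i), hef_ii, map_neg]
    have hHF' : ⁅-(ρ (hQ A i)), ρ (eQ A i)⁆ = (-2 : ℂ) • ρ (eQ A i) := by
      rw [neg_lie, ← LieHom.map_lie, lie_hQ_eQ, hdiag i, lieHom_map_zsmul, hcast2]
    have hEX' : ⁅ρ (fQ A i), ρ (eQ A j)⁆ = 0 := by
      rw [← LieHom.map_lie, ← lie_skew (fQ A i) (eQ A j), hef_ji, neg_zero, map_zero]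
    have hHX' : ⁅-(ρ (hQ A i)), ρ (eQ A j)⁆ = (l : ℂ) • ρ (eQ A j) := by
      rw [neg_lie, ← LieHom.map_lie, lie_hQ_eQ, lieHom_map_zsmul, hcast]
    intro m
    have key := serre_aux (ρ (fQ A i)) (ρ (eQ A i)) (-(ρ (hQ A i))) (ρ (eQ A j)) l
      hEF' hHF' hEX' hHX' (hniF i) (hniE i) m
    rw [← toEnd_adIter] at key
    rw [hN]
    exact key
  · -- f-side
    have hEF' : ⁅ρ (eQ A i), ρ (fQ A i)⁆ = ρ (hQ A i) := by
      rw [← LieHom.map_lie, hef_ii]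
    have hHF' : ⁅ρ (hQ A i), ρ (fQ A i)⁆ = (-2 : ℂ) • ρ (fQ A i) := by
      rw [← LieHom.map_lie, lie_hQ_fQ, hdiag i, map_neg, lieHom_map_zsmul, hcast2]
    have hEX' : ⁅ρ (eQ A i), ρ (fQ A j)⁆ = 0 := by
      rw [← LieHom.map_lie, hef_ij, map_zero]
    have hHX' : ⁅ρ (hQ A i), ρ (fQ A j)⁆ = (l : ℂ) • ρ (fQ A j) := by
      rw [← LieHom.map_lie, lie_hQ_fQ, map_neg, lieHom_map_zsmul, hcast]
    intro m
    have key := serre_aux (ρ (eQ A i)) (ρ (fQ A i)) (ρ (hQ A i)) (ρ (fQ A j)) l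
      hEF' hHF' hEX' hHX' (hniE i) (hniF i) m
    rw [← toEnd_adIter] at key
    rw [hN]
    exact key
end
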